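/- arXiv:1411.4498 — 5 statements merged into one kernel-verified Lean document; each statement's English description precedes it below -/
import Mathlib

section
/- Let A = {Q_1, …, Q_t} be a sequence of queries with t ≤ (k/(2b))·log₂(n/k) − (k+1)/b, where k ≤ n, k is even, and k/2 is a prime power. Then there exist two sets A, B ∈ F_k^n such that (a) |A ∩ B| = k/2, and (b) |A ∩ Q_{i,β}| is odd if and only if |B ∩ Q_{i,β}| is odd, for every 1 ≤ β ≤ b and 1 ≤ i ≤ t. -/
open scoped Classical

/-- `Qsub Q β` is the set of stations transmitting on channel `β` in query `Q`,
i.e. `Q_{i,β} = {x : (x,β) ∈ Q_i}`. -/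
def Qsub {n b : ℕ} (Q : Finset (Fin n × Fin b)) (β : Fin b) : Finset (Fin n) :=
  Finset.univ.filter fun x => (x, β) ∈ Q

namespace WakeUpAux
open Finset

section Lucas
variable {p : ℕ} [hp : Fact p.Prime]

private lemma md_mod (x r : ℕ) (hp0 : 0 < p) (hr : r < p) : (p * x + r) % p = r := by
  rw [Nat.mul_add_mod]; exact Nat.mod_eq_of_lt hr

private lemma md_div (x r : ℕ) (hp0 : 0 < p) (hr : r < p) : (p * x + r) / p = x := by
  rw [Nat.mul_add_div hp0, Nat.div_eq_of_lt hr]; omega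

lemma choose_zmod_split (a b : ℕ) :
    ((a.choose b : ℕ) : ZMod p) = ((a % p).choose (b % p) : ℕ) * ((a / p).choose (b / p) : ℕ) := by
  have h := Choose.choose_modEq_choose_mod_mul_choose_div_nat (n := a) (k := b) (p := p)
  have := (ZMod.natCast_eq_natCast_iff _ _ _).mpr h
  simpa using this

lemma lucasL1 (m : ℕ) : (((2 * p ^ m - 1).choose (p ^ m - 1) : ℕ) : ZMod p) = 1 := by
  induction m with
  | zero => simp
  | succ m ih =>
    have hp2 : 2 ≤ p := hp.out.two_le
    set P := p ^ m with hPdef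
    have hP : 1 ≤ P := Nat.one_le_pow _ _ (by omega)
    have hpow : p ^ (m+1) = p * P := by rw [pow_succ]; ring
    have hple : p ≤ p * P := Nat.le_mul_of_pos_right p hP
    have a1 : p * (2 * P - 1) = 2 * (p * P) - p := by
      rw [Nat.mul_sub, mul_one, show p * (2 * P) = 2 * (p * P) from by ring]
    have a2 : p * (P - 1) = p * P - p := by rw [Nat.mul_sub, mul_one]
    have e1 : 2 * p ^ (m+1) - 1 = p * (2 * P - 1) + (p - 1) := by rw [hpow]; omega
    have e2 : p ^ (m+1) - 1 = p * (P - 1) + (p - 1) := by rw [hpow]; omega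
    rw [e1, e2, choose_zmod_split,
      md_mod _ _ (by omega) (by omega), md_div _ _ (by omega) (by omega),
      md_mod _ _ (by omega) (by omega), md_div _ _ (by omega) (by omega)]
    simp [ih]

lemma lucasL2 (m : ℕ) : ∀ a : ℕ, 1 ≤ a → a ≤ p ^ m - 1 →
    (((p ^ m - 1 + a).choose (p ^ m - 1) : ℕ) : ZMod p) = 0 := by
  induction m with
  | zero => intro a h1 h2; simp at h2; omega
  | succ m ih =>
    intro a h1 h2
    have hp2 : 2 ≤ p := hp.out.two_le
    set P := p ^ m with hPdef
    have hP : 1 ≤ P := Nat.one_le_pow _ _ (by omega)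
    have hpow : p ^ (m+1) = p * P := by rw [pow_succ]; ring
    have hple : p ≤ p * P := Nat.le_mul_of_pos_right p hP
    have a2 : p * (P - 1) = p * P - p := by rw [Nat.mul_sub, mul_one]
    have e2 : p ^ (m+1) - 1 = p * (P - 1) + (p - 1) := by rw [hpow]; omega
    have hdm : a = p * (a / p) + a % p := (Nat.div_add_mod a p).symm
    rcases Nat.eq_zero_or_pos (a % p) with hr | hr
    · -- a = p * a'
      set a' := a / p with ha'
      have ha : a = p * a' := by omega
      have ha'1 : 1 ≤ a' := by
        rcases Nat.eq_zero_or_pos a' with h | h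
        · rw [h, Nat.mul_zero] at ha; omega
        · exact h
      have ha'2 : a' ≤ P - 1 := by
        by_contra hcon
        push_neg at hcon
        have h3 : P ≤ a' := by omega
        have h4 : p * P ≤ p * a' := Nat.mul_le_mul_left _ h3
        rw [hpow] at h2; omega
      have a3 : p * (P - 1 + a') = p * (P - 1) + p * a' := by ring
      have e3 : p ^ (m+1) - 1 + a = p * (P - 1 + a') + (p - 1) := by
        rw [e2, ha, a3]; ring
      rw [e3, e2, choose_zmod_split,
        md_mod _ _ (by omega) (by omega), md_div _ _ (by omega) (by omega),
        md_mod _ _ (by omega) (by omega), md_div _ _ (by omega) (by omega)]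
      simp [ih a' ha'1 ha'2]
    · -- low digit is a % p - 1 < p - 1
      have hmod : a % p < p := Nat.mod_lt _ (by omega)
      have a3 : p * (P - 1 + a / p + 1) = p * (P - 1) + p * (a / p) + p := by ring
      have e3 : p ^ (m+1) - 1 + a = p * (P - 1 + a / p + 1) + (a % p - 1) := by
        rw [e2, a3]; omega
      rw [e3, e2, choose_zmod_split,
        md_mod _ _ (by omega) (by omega),
        md_mod _ _ (by omega) (by omega)]
      rw [Nat.choose_eq_zero_of_lt (show a % p - 1 < p - 1 by omega)]
      simp
end Lucas

section FW
variable {p : ℕ} [hp : Fact p.Prime]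

lemma fw_bound {n q m : ℕ} (hq : q = p ^ m) (hq1 : 1 ≤ q)
    (G : Finset (Finset (Fin n)))
    (hG : G ⊆ Finset.powersetCard (2 * q - 1) Finset.univ)
    (hfree : ∀ A ∈ G, ∀ B ∈ G, A ≠ B → (A ∩ B).card ≠ q - 1) :
    G.card ≤ n.choose (q - 1) := by
  set I : Finset (Finset (Fin n)) := Finset.powersetCard (q - 1) Finset.univ with hI
  set v : ↥G → (↥I → ZMod p) := fun A S => if S.1 ⊆ A.1 then 1 else 0 with hv
  have hcardA : ∀ A : ↥G, (A.1).card = 2 * q - 1 := by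
    intro A
    have := hG A.2
    exact (Finset.mem_powersetCard.mp this).2
  have hdot : ∀ A B : ↥G,
      (∑ S : ↥I, v A S * v B S) = (((A.1 ∩ B.1).card.choose (q - 1) : ℕ) : ZMod p) := by
    intro A B
    have h1 : (∑ S : ↥I, v A S * v B S)
        = ∑ S ∈ I, (if S ⊆ A.1 ∩ B.1 then (1 : ZMod p) else 0) := by
      rw [← Finset.sum_attach I (fun S => (if S ⊆ A.1 ∩ B.1 then (1 : ZMod p) else 0))]
      apply Finset.sum_congr rfl
      intro S _
      simp only [hv, Finset.subset_inter_iff]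
      by_cases h1 : S.1 ⊆ A.1 <;> by_cases h2 : S.1 ⊆ B.1 <;> simp [h1, h2]
    rw [h1, Finset.sum_boole]
    norm_cast
    congr 1
    have : Finset.filter (fun S => S ⊆ A.1 ∩ B.1) I = Finset.powersetCard (q-1) (A.1 ∩ B.1) := by
      ext S
      simp [hI, Finset.mem_powersetCard, Finset.mem_filter]
      tauto
    rw [this, Finset.card_powersetCard]
  have hdiag : ∀ A : ↥G, (∑ S : ↥I, v A S * v A S) = 1 := by
    intro A
    rw [hdot, Finset.inter_self, hcardA A, hq]
    exact lucasL1 m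
  have hoff : ∀ A B : ↥G, A ≠ B → (∑ S : ↥I, v A S * v B S) = 0 := by
    intro A B hne
    rw [hdot]
    have hABne : A.1 ≠ B.1 := fun h => hne (Subtype.ext h)
    have hji : (A.1 ∩ B.1).card ≠ q - 1 := hfree A.1 A.2 B.1 B.2 hABne
    have hle : (A.1 ∩ B.1).card < 2 * q - 1 := by
      have hle1 : (A.1 ∩ B.1).card ≤ 2 * q - 1 := by
        rw [← hcardA A]; exact Finset.card_le_card Finset.inter_subset_left
      rcases lt_or_eq_of_le hle1 with h | h
      · exact h
      · exfalso
        have h2 : A.1 ∩ B.1 = A.1 :=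
          Finset.eq_of_subset_of_card_le Finset.inter_subset_left (by rw [hcardA A, h])
        have h3 : A.1 ⊆ B.1 := by rw [← Finset.inter_eq_left]; exact h2
        have h4 : A.1 = B.1 := Finset.eq_of_subset_of_card_le h3 (by rw [hcardA A, hcardA B])
        exact hABne h4
    rcases lt_trichotomy ((A.1 ∩ B.1).card) (q-1) with h | h | h
    · rw [Nat.choose_eq_zero_of_lt h]; simp
    · exact absurd h hji
    · have e : (A.1 ∩ B.1).card = (q - 1) + ((A.1 ∩ B.1).card - (q-1)) := by omega
      rw [e, hq]
      apply lucasL2 m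
      · omega
      · rw [← hq]; omega
  have hli : LinearIndependent (ZMod p) v := by
    rw [Fintype.linearIndependent_iff]
    intro g hg B
    have h0 : (∑ S : ↥I, (∑ A : ↥G, g A • v A) S * v B S) = 0 := by
      rw [hg]; simp
    have h1 : (∑ S : ↥I, (∑ A : ↥G, g A • v A) S * v B S)
        = ∑ A : ↥G, g A * (∑ S : ↥I, v A S * v B S) := by
      simp only [Finset.sum_apply, Pi.smul_apply, smul_eq_mul, Finset.sum_mul, Finset.mul_sum]
      rw [Finset.sum_comm]
      apply Finset.sum_congr rfl; intros; apply Finset.sum_congr rfl; intros; ring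
    rw [h1] at h0
    rw [Finset.sum_eq_single B] at h0
    · rw [hdiag B, mul_one] at h0; exact h0
    · intro A _ hne; rw [hoff A B hne, mul_zero]
    · intro h; exact absurd (Finset.mem_univ B) h
  have hcard := hli.fintype_card_le_finrank
  rw [Module.finrank_fintype_fun_eq_card] at hcard
  simpa [Fintype.card_coe, hI, Finset.card_powersetCard] using hcard
end FW

lemma choose_ratio (n q : ℕ) (hq1 : 1 ≤ q) :
    ∀ j, j ≤ q → n.choose (q-1) * (n - 2*q)^j ≤ n.choose (q-1+j) * (2*q)^j := by
  intro j
  induction j with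
  | zero => simp
  | succ j ih =>
    intro hj
    have hj' : j ≤ q := by omega
    calc n.choose (q-1) * (n - 2*q)^(j+1)
        = (n.choose (q-1) * (n - 2*q)^j) * (n - 2*q) := by ring
      _ ≤ (n.choose (q-1+j) * (2*q)^j) * (n - 2*q) :=
          Nat.mul_le_mul_right _ (ih hj')
      _ = (2*q)^j * (n.choose (q-1+j) * (n - 2*q)) := by ring
      _ ≤ (2*q)^j * (n.choose (q-1+j) * (n - (q-1+j))) := by
          apply Nat.mul_le_mul_left
          apply Nat.mul_le_mul_left
          apply Nat.sub_le_sub_left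
          omega
      _ = (2*q)^j * (n.choose ((q-1+j)+1) * ((q-1+j)+1)) := by
          rw [Nat.choose_succ_right_eq]
      _ ≤ (2*q)^j * (n.choose ((q-1+j)+1) * (2*q)) := by
          apply Nat.mul_le_mul_left
          apply Nat.mul_le_mul_left
          omega
      _ = n.choose (q-1+(j+1)) * (2*q)^(j+1) := by
          have : (q-1+j)+1 = q-1+(j+1) := by omega
          rw [this]; ring

end WakeUpAux

open Finset WakeUpAux in
/-- Let `Q_1, …, Q_t` be a sequence of queries with
`t ≤ (k/(2b))·log₂(n/k) − (k+1)/b`, where `k ≤ n`, `k` is even and `k/2` is a prime power.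
Then there exist two `k`-element sets `A, B ⊆ [n]` such that (a) `|A ∩ B| = k/2`, and
(b) `|A ∩ Q_{i,β}|` is odd iff `|B ∩ Q_{i,β}|` is odd, for every channel `β` and round `i`. -/
theorem statement_1 (n b t k : ℕ) (hn : 0 < n) (hb : 0 < b) (hkn : k ≤ n)
    (hke : Even k) (hpp : IsPrimePow (k / 2))
    (Q : Fin t → Finset (Fin n × Fin b))
    (ht : (t : ℝ) ≤ (k : ℝ) / (2 * b) * Real.logb 2 ((n : ℝ) / k) - ((k : ℝ) + 1) / b) :
    ∃ A ∈ Finset.powersetCard k (Finset.univ : Finset (Fin n)),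
      ∃ B ∈ Finset.powersetCard k (Finset.univ : Finset (Fin n)),
        (A ∩ B).card = k / 2 ∧
        ∀ (i : Fin t) (β : Fin b),
          (Odd (A ∩ Qsub (Q i) β).card ↔ Odd (B ∩ Qsub (Q i) β).card) := by
  classical
  set q := k / 2 with hqdef
  have hq2 : 2 ≤ q := hpp.two_le
  have hk2 : k = 2 * q := by
    rcases hke with ⟨r, hr⟩; omega
  have hk0 : 0 < k := by omega
  obtain ⟨p, m, hpprime, hm, hqpm⟩ := hpp
  haveI : Fact p.Prime := ⟨Nat.prime_iff.mpr hpprime⟩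
  -- ========== numeric part ==========
  have hbR : (0:ℝ) < b := by exact_mod_cast hb
  have hkR : (0:ℝ) < k := by exact_mod_cast hk0
  have hnR : (0:ℝ) < n := by exact_mod_cast hn
  set L := Real.logb 2 ((n : ℝ) / k) with hL
  have step1 : (t:ℝ) * b ≤ (k/2) * L - (k+1) := by
    have h := mul_le_mul_of_nonneg_right ht (le_of_lt hbR)
    have e : ((k:ℝ) / (2*b) * L - ((k:ℝ)+1)/b) * b = (k/2)*L - (k+1) := by
      field_simp
    rw [e] at h; exact h
  have step2 : ((t*b + k + 1 : ℕ) : ℝ) ≤ (k/2) * L := by push_cast; nlinarith [step1]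
  have step3 : (2:ℝ) ^ ((t*b + k + 1 : ℕ) : ℝ) ≤ (2:ℝ) ^ ((k/2) * L) :=
    Real.rpow_le_rpow_of_exponent_le one_le_two step2
  have hx : (0:ℝ) < (n:ℝ)/k := by positivity
  have e4 : (2:ℝ) ^ ((k/2) * L) = ((n:ℝ)/k) ^ (q:ℕ) := by
    rw [mul_comm ((k:ℝ)/2) L, Real.rpow_mul (by norm_num : (0:ℝ) ≤ 2),
      Real.rpow_logb (by norm_num) (by norm_num) hx]
    have : (k:ℝ)/2 = (q:ℕ) := by rw [hk2]; push_cast; ring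
    rw [this, Real.rpow_natCast]
  have e5 : (2:ℝ) ^ ((t*b + k + 1 : ℕ) : ℝ) = (2:ℝ) ^ (t*b + k + 1 : ℕ) :=
    Real.rpow_natCast 2 _
  have step4 : (2:ℝ) ^ (t*b + k + 1 : ℕ) * (k:ℝ)^(q:ℕ) ≤ (n:ℝ)^(q:ℕ) := by
    have h := step3
    rw [e4, e5] at h
    have h2 := mul_le_mul_of_nonneg_right h (le_of_lt (pow_pos hkR q))
    calc (2:ℝ) ^ (t*b + k + 1 : ℕ) * (k:ℝ)^(q:ℕ) ≤ ((n:ℝ)/k)^(q:ℕ) * (k:ℝ)^(q:ℕ) := h2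
      _ = (n:ℝ)^(q:ℕ) := by rw [div_pow, div_mul_cancel₀]; positivity
  have M1 : 2 ^ (t*b + k + 1) * k^q ≤ n^q := by exact_mod_cast step4
  rw [hk2] at M1
  have M1' : 2 ^ (t*b + (2*q + 1)) * (2*q)^q ≤ n^q := by
    have e : t*b + 2*q + 1 = t*b + (2*q+1) := by omega
    rw [← e]; exact M1
  have hn8 : 8*q < n := by
    have h0 : 2 ^ (2*q+1) * (2*q)^q ≤ n^q := by
      calc 2 ^ (2*q+1) * (2*q)^q ≤ 2 ^ (t*b + (2*q+1)) * (2*q)^q := by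
            apply Nat.mul_le_mul_right
            exact Nat.pow_le_pow_right (by omega) (by omega)
        _ ≤ n^q := M1'
    have h1 : 2 * (8*q)^q ≤ n^q := by
      calc 2 * (8*q)^q = 2^(2*q+1) * (2*q)^q := by
            rw [pow_succ, pow_mul, show (2:ℕ)^2 = 4 from rfl,
              show 8*q = 4*(2*q) from by ring, mul_pow]
            ring
        _ ≤ n^q := h0
    have h2 : (8*q)^q < n^q := by
      have hpos8 : 0 < (8*q)^q := Nat.pow_pos (by omega)
      omega
    exact (Nat.pow_lt_pow_iff_left (by omega)).mp h2
  have KEY : 2 ^ (t*b) * n.choose (q-1) < n.choose (2*q-1) := by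
    have c2 : n^q ≤ 4^q * (n-2*q)^q := by
      have hle : n ≤ 4*(n-2*q) := by omega
      calc n^q ≤ (4*(n-2*q))^q := Nat.pow_le_pow_left hle q
        _ = 4^q * (n-2*q)^q := mul_pow _ _ _
    have c3 := choose_ratio n q (by omega) q (le_refl q)
    have e6 : q - 1 + q = 2*q - 1 := by omega
    rw [e6] at c3
    have chain : 2 ^ (t*b + (2*q+1)) * (2*q)^q * n.choose (q-1)
        ≤ 4^q * ((2*q)^q * n.choose (2*q-1)) := by
      calc 2 ^ (t*b + (2*q+1)) * (2*q)^q * n.choose (q-1)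
          ≤ n^q * n.choose (q-1) := Nat.mul_le_mul_right _ M1'
        _ ≤ (4^q * (n-2*q)^q) * n.choose (q-1) := Nat.mul_le_mul_right _ c2
        _ = 4^q * (n.choose (q-1) * (n-2*q)^q) := by ring
        _ ≤ 4^q * (n.choose (2*q-1) * (2*q)^q) := Nat.mul_le_mul_left _ c3
        _ = 4^q * ((2*q)^q * n.choose (2*q-1)) := by ring
    have hpos : 0 < (2*q)^q := by positivity
    have chain2 : 2 ^ (t*b + (2*q+1)) * n.choose (q-1) ≤ 4^q * n.choose (2*q-1) := by
      have h := chain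
      have e7 : 2 ^ (t*b + (2*q+1)) * (2*q)^q * n.choose (q-1)
          = (2 ^ (t*b + (2*q+1)) * n.choose (q-1)) * (2*q)^q := by ring
      have e8 : 4^q * ((2*q)^q * n.choose (2*q-1)) = (4^q * n.choose (2*q-1)) * (2*q)^q := by ring
      rw [e7, e8] at h
      exact Nat.le_of_mul_le_mul_right h hpos
    have e9 : 2 ^ (t*b + (2*q+1)) = (2 ^ (t*b) * 2) * 2^(2*q) := by
      rw [pow_add]; ring_nf
    have e10 : (4:ℕ)^q = 2^(2*q) := by rw [pow_mul]; norm_num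
    rw [e9, e10] at chain2
    have chain3 : 2 * (2 ^ (t*b) * n.choose (q-1)) ≤ n.choose (2*q-1) := by
      have h := chain2
      have e11 : 2 ^ (t*b) * 2 * 2^(2*q) * n.choose (q-1)
          = (2 * (2 ^ (t*b) * n.choose (q-1))) * 2^(2*q) := by ring
      have e12 : 2^(2*q) * n.choose (2*q-1) = n.choose (2*q-1) * 2^(2*q) := by ring
      rw [e11, e12] at h
      exact Nat.le_of_mul_le_mul_right h (by positivity)
    have hC : 0 < n.choose (2*q-1) := Nat.choose_pos (by omega)
    omega
  -- ========== pigeonhole ==========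
  set f : Finset (Fin n) → (Fin t × Fin b → ZMod 2) :=
    fun A z => ((A ∩ Qsub (Q z.1) z.2).card : ZMod 2) with hf
  have hmaps : ∀ A ∈ Finset.powersetCard (2*q-1) (Finset.univ : Finset (Fin n)),
      f A ∈ (Finset.univ : Finset (Fin t × Fin b → ZMod 2)) := fun A _ => mem_univ _
  have hcount : (Finset.univ : Finset (Fin t × Fin b → ZMod 2)).card * (n.choose (q-1))
      < (Finset.powersetCard (2*q-1) (Finset.univ : Finset (Fin n))).card := by
    rw [card_univ, Fintype.card_fun, Fintype.card_prod, Fintype.card_fin, Fintype.card_fin,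
      ZMod.card, card_powersetCard, card_univ, Fintype.card_fin]
    exact KEY
  obtain ⟨y, -, hy⟩ := Finset.exists_lt_card_fiber_of_mul_lt_card_of_maps_to hmaps hcount
  set G := (Finset.powersetCard (2*q-1) (Finset.univ : Finset (Fin n))).filter
    (fun A => f A = y) with hGdef
  have hGcard : n.choose (q-1) < G.card := hy
  have hGsub : G ⊆ Finset.powersetCard (2*q-1) Finset.univ := filter_subset _ _
  -- ========== find the pair ==========
  have hpair : ∃ A ∈ G, ∃ B ∈ G, A ≠ B ∧ (A ∩ B).card = q - 1 := by
    by_contra hcon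
    push_neg at hcon
    have hbound := fw_bound (p := p) hqpm.symm (by omega) G hGsub
      (fun A hA B hB hne => hcon A hA B hB hne)
    omega
  obtain ⟨A, hA, B, hB, hne, hAB⟩ := hpair
  have hAcard : A.card = 2*q-1 := (Finset.mem_powersetCard.mp (hGsub hA)).2
  have hBcard : B.card = 2*q-1 := (Finset.mem_powersetCard.mp (hGsub hB)).2
  have hfA : f A = y := (mem_filter.mp hA).2
  have hfB : f B = y := (mem_filter.mp hB).2
  -- fresh element
  have hunion : (A ∪ B).card = 3*q - 1 := by
    have h := Finset.card_union_add_card_inter A B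
    omega
  have hex : ∃ x : Fin n, x ∉ A ∪ B := by
    by_contra hcon
    push_neg at hcon
    have hsub : (Finset.univ : Finset (Fin n)) ⊆ A ∪ B := fun x _ => hcon x
    have hcard := Finset.card_le_card hsub
    rw [card_univ, Fintype.card_fin] at hcard
    omega
  obtain ⟨x, hx⟩ := hex
  have hxA : x ∉ A := fun h => hx (mem_union_left _ h)
  have hxB : x ∉ B := fun h => hx (mem_union_right _ h)
  refine ⟨insert x A, ?_, insert x B, ?_, ?_, ?_⟩
  · rw [Finset.mem_powersetCard]
    refine ⟨subset_univ _, ?_⟩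
    rw [card_insert_of_notMem hxA, hAcard]; omega
  · rw [Finset.mem_powersetCard]
    refine ⟨subset_univ _, ?_⟩
    rw [card_insert_of_notMem hxB, hBcard]; omega
  · rw [← Finset.insert_inter_distrib,
      card_insert_of_notMem (fun h => hxA (Finset.mem_of_mem_inter_left h)), hAB]
    omega
  · intro i β
    have hfeq : ((A ∩ Qsub (Q i) β).card : ZMod 2) = ((B ∩ Qsub (Q i) β).card : ZMod 2) := by
      have := congrFun (hfA.trans hfB.symm) (i, β)
      simpa [hf] using this
    have hmod : (A ∩ Qsub (Q i) β).card % 2 = (B ∩ Qsub (Q i) β).card % 2 :=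
      (ZMod.natCast_eq_natCast_iff _ _ _).mp hfeq
    by_cases hxQ : x ∈ Qsub (Q i) β
    · rw [Finset.insert_inter_of_mem hxQ, Finset.insert_inter_of_mem hxQ,
        card_insert_of_notMem (fun h => hxA (Finset.mem_of_mem_inter_left h)),
        card_insert_of_notMem (fun h => hxB (Finset.mem_of_mem_inter_left h)),
        Nat.odd_iff, Nat.odd_iff]
      omega
    · rw [Finset.insert_inter_of_notMem hxQ, Finset.insert_inter_of_notMem hxQ,
        Nat.odd_iff, Nat.odd_iff]
      omega
end

section
/- Let n, b, k be positive integers with 4 ≤ k ≤ n. Suppose a sequence of queries Q_1, …, Q_t has the wake-up property: for every nonempty set X ⊆ [n] with |X| ≤ k there exist 1 ≤ i ≤ t and 1 ≤ β ≤ b such that |X ∩ Q_{i,β}| = 1. Then t > (k/(4b))·log₂(n/k) − (k+1)/b. (In other words, any deterministic oblivious algorithm waking up a network of n nodes with b channels when at most k nodes are activated simultaneously requires more than (k/(4b))·log₂(n/k) − (k+1)/b time steps.) -/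
open scoped Classical symmDiff

/-- Key parity fact: `|s ∆ t| + 2|s ∩ t| = |s| + |t|`. -/
lemma card_symmDiff_aux {α : Type*} [DecidableEq α] (s t : Finset α) :
    (s ∆ t).card + 2 * (s ∩ t).card = s.card + t.card := by
  have h1 : s ∆ t = (s \ t) ∪ (t \ s) := by
    rw [symmDiff_def, Finset.sup_eq_union]
  have h2 : Disjoint (s \ t) (t \ s) :=
    disjoint_sdiff_sdiff
  have h3 := Finset.card_sdiff_add_card_inter s t
  have h4 := Finset.card_sdiff_add_card_inter t s
  rw [Finset.inter_comm t s] at h4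
  rw [h1, Finset.card_union_of_disjoint h2]
  omega

/-- Lower bound: if a sequence of queries `Q_1, …, Q_t` on `n` stations and `b` channels has
the wake-up property — for every nonempty `X ⊆ [n]` with `|X| ≤ k` there are a round `i` and a
channel `β` with `|X ∩ Q_{i,β}| = 1` — and `4 ≤ k ≤ n`, then
`t > (k/(4b))·log₂(n/k) − (k+1)/b`. -/
theorem statement_2 (n b t k : ℕ) (hn : 0 < n) (hb : 0 < b) (hk : 4 ≤ k) (hkn : k ≤ n)
    (Q : Fin t → Finset (Fin n × Fin b))
    (hwake : ∀ X : Finset (Fin n), X.Nonempty → X.card ≤ k →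
      ∃ (i : Fin t) (β : Fin b), (X ∩ Qsub (Q i) β).card = 1) :
    (k : ℝ) / (4 * b) * Real.logb 2 ((n : ℝ) / k) - ((k : ℝ) + 1) / b < (t : ℝ) := by
  set h : ℕ := k / 2 with hh
  have hh2 : 2 * h ≤ k := Nat.mul_div_le k 2 |>.trans_eq (by ring_nf) |>.trans (le_refl k)
  have hhk : 2 * h ≤ k := by omega
  have hhge : 2 ≤ h := by omega
  have hhn : h ≤ n := by omega
  -- the parity map
  set φ : Finset (Fin n) → (Fin t × Fin b → ZMod 2) :=
    fun S p => ((S ∩ Qsub (Q p.1) p.2).card : ZMod 2) with hφ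
  -- injectivity on h-element subsets
  have hinj : Set.InjOn φ ↑(Finset.powersetCard h (Finset.univ : Finset (Fin n))) := by
    intro A hA B hB hAB
    by_contra hne
    have hAcard : A.card = h := (Finset.mem_powersetCard.mp (Finset.mem_coe.mp hA)).2
    have hBcard : B.card = h := (Finset.mem_powersetCard.mp (Finset.mem_coe.mp hB)).2
    set X : Finset (Fin n) := A ∆ B with hX
    have hXne : X.Nonempty := by
      rw [hX]; exact Finset.symmDiff_nonempty.mpr hne
    have hcards := card_symmDiff_aux A B
    have hXcard : X.card ≤ k := by
      rw [hX]; omega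
    obtain ⟨i, β, hsel⟩ := hwake X hXne hXcard
    set S : Finset (Fin n) := Qsub (Q i) β with hS
    -- parity of |X ∩ S|
    have hdist : X ∩ S = (A ∩ S) ∆ (B ∩ S) := by
      rw [hX]
      have := inf_symmDiff_distrib_right (a := A) (b := B) (c := S)
      simpa [Finset.inf_eq_inter] using this
    have hpar := card_symmDiff_aux (A ∩ S) (B ∩ S)
    have hABp : ((A ∩ S).card : ZMod 2) = ((B ∩ S).card : ZMod 2) := by
      have := congrFun hAB (i, β)
      simpa [hφ, hS] using this
    have hzero : ((X ∩ S).card : ZMod 2) = 0 := by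
      have : (((A ∩ S) ∆ (B ∩ S)).card : ZMod 2) + 2 * ((A ∩ S) ∩ (B ∩ S)).card
          = ((A ∩ S).card : ZMod 2) + (B ∩ S).card := by
        exact_mod_cast congrArg (Nat.cast : ℕ → ZMod 2) hpar
      rw [hdist]
      have h2 : (2 : ZMod 2) = 0 := by decide
      rw [h2, zero_mul, add_zero] at this
      rw [this, hABp, ← two_mul, h2, zero_mul]
    rw [hsel] at hzero
    exact one_ne_zero hzero
  -- counting: choose n h ≤ 2 ^ (t * b)
  have hcount : n.choose h ≤ 2 ^ (t * b) := by
    have hcard1 : (Finset.powersetCard h (Finset.univ : Finset (Fin n))).card = n.choose h := by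
      simp [Finset.card_powersetCard]
    have hle : (Finset.powersetCard h (Finset.univ : Finset (Fin n))).card ≤
        (Finset.univ : Finset (Fin t × Fin b → ZMod 2)).card := by
      exact Finset.card_le_card_of_injOn φ (fun a _ => Finset.mem_univ _) hinj
    have hcard2 : (Finset.univ : Finset (Fin t × Fin b → ZMod 2)).card = 2 ^ (t * b) := by
      rw [Finset.card_univ, Fintype.card_fun]
      simp [ZMod.card]
    rw [hcard1, hcard2] at hle
    exact hle
  -- real-number estimates
  have hbR : (0 : ℝ) < b := by exact_mod_cast hb
  have hkR : (0 : ℝ) < k := by positivity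
  have hnkpos : (0 : ℝ) < (n : ℝ) / k := by positivity
  have hnk1 : (1 : ℝ) ≤ (n : ℝ) / k := by
    rw [le_div_iff₀ hkR]
    simpa using (Nat.cast_le (α := ℝ)).mpr hkn
  have hhR : (0 : ℝ) < h := by exact_mod_cast (by omega : 0 < h)
  -- (n/k)^h ≤ choose n h
  have hchoose : ((n : ℝ) / k) ^ h ≤ (n.choose h : ℝ) := by
    have hfac : ((n : ℝ) / k) ^ h ≤ (((n + 1 - h : ℕ) : ℝ) ^ h) / (h.factorial : ℝ) := by
      have hbase : (n : ℝ) / k ≤ ((n + 1 - h : ℕ) : ℝ) / (h : ℝ) := by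
        have hcast : ((n + 1 - h : ℕ) : ℝ) = (n : ℝ) + 1 - h := by
          have : h ≤ n + 1 := by omega
          push_cast [this]; ring
        rw [hcast, div_le_div_iff₀ hkR hhR]
        have h1 : (2 * h : ℝ) ≤ k := by exact_mod_cast hhk
        have h2 : (k : ℝ) ≤ n := by exact_mod_cast hkn
        nlinarith
      calc ((n : ℝ) / k) ^ h ≤ (((n + 1 - h : ℕ) : ℝ) / (h : ℝ)) ^ h := by
            apply pow_le_pow_left₀ (le_of_lt hnkpos) hbase
        _ = (((n + 1 - h : ℕ) : ℝ) ^ h) / ((h : ℝ) ^ h) := div_pow _ _ _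
        _ ≤ (((n + 1 - h : ℕ) : ℝ) ^ h) / (h.factorial : ℝ) := by
            apply div_le_div_of_nonneg_left (by positivity) (by positivity)
            exact_mod_cast Nat.factorial_le_pow h
    calc ((n : ℝ) / k) ^ h ≤ (((n + 1 - h : ℕ) : ℝ) ^ h) / (h.factorial : ℝ) := hfac
      _ ≤ (n.choose h : ℝ) := Nat.pow_le_choose h n
  -- main inequality: (k/4) * logb 2 (n/k) ≤ t * b
  have hmain : (k : ℝ) / 4 * Real.logb 2 ((n : ℝ) / k) ≤ (t : ℝ) * b := by
    have hle2 : ((n : ℝ) / k) ^ ((k : ℝ) / 4) ≤ (2 : ℝ) ^ (t * b) := by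
      have e1 : ((n : ℝ) / k) ^ ((k : ℝ) / 4) ≤ ((n : ℝ) / k) ^ ((h : ℕ) : ℝ) := by
        apply Real.rpow_le_rpow_of_exponent_le hnk1
        have : (2 * h + 1 : ℝ) ≥ k := by
          have : k ≤ 2 * h + 1 := by omega
          exact_mod_cast this
        have hk4 : (4 : ℝ) ≤ k := by exact_mod_cast hk
        nlinarith
      have e2 : ((n : ℝ) / k) ^ ((h : ℕ) : ℝ) = ((n : ℝ) / k) ^ h :=
        Real.rpow_natCast _ h
      have e3 : (n.choose h : ℝ) ≤ (2 : ℝ) ^ (t * b) := by exact_mod_cast hcount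
      calc ((n : ℝ) / k) ^ ((k : ℝ) / 4) ≤ ((n : ℝ) / k) ^ h := by rw [← e2]; exact e1
        _ ≤ (n.choose h : ℝ) := hchoose
        _ ≤ (2 : ℝ) ^ (t * b) := e3
    have hpos1 : (0 : ℝ) < ((n : ℝ) / k) ^ ((k : ℝ) / 4) := Real.rpow_pos_of_pos hnkpos _
    have := Real.logb_le_logb_of_le (b := 2) (by norm_num) hpos1 hle2
    rw [Real.logb_rpow_eq_mul_logb_of_pos hnkpos, Real.logb_pow,
      Real.logb_self_eq_one (by norm_num), mul_one] at this
    push_cast at this ⊢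
    linarith
  -- conclude
  have hdiv : (k : ℝ) / (4 * b) * Real.logb 2 ((n : ℝ) / k) ≤ (t : ℝ) := by
    rw [div_mul_eq_div_div, div_mul_eq_mul_div, div_le_iff₀ hbR]
    calc (k : ℝ) / 4 * Real.logb 2 ((n : ℝ) / k) ≤ (t : ℝ) * b := hmain
      _ = (t : ℝ) * b := rfl
  have hpos : (0 : ℝ) < ((k : ℝ) + 1) / b := by positivity
  linarith
end

section
/- Let k ≥ 1 and b ≥ 1 be integers, let 1 ≤ β ≤ b, and let w be an integer with k^{(β−1)/b} ≤ w ≤ k^{β/b}. If each of w stations transmits on channel β independently with probability k^{−β/b}, then the probability that exactly one of them transmits (a successful transmission on channel β) is at least 1/(2e·k^{1/b}); equivalently, w·k^{−β/b}·(1 − k^{−β/b})^{w−1} ≥ 1/(2e·k^{1/b}). -/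
/-- Let `k ≥ 1`, `b ≥ 1`, `1 ≤ β ≤ b`, and let `w` be an integer with
`k^((β−1)/b) ≤ w ≤ k^(β/b)`.  If each of `w` stations transmits on channel `β` independently
with probability `k^(−β/b)`, then the probability that exactly one of them transmits is at
least `1/(2e·k^(1/b))`; equivalently,
`w·k^(−β/b)·(1 − k^(−β/b))^(w−1) ≥ 1/(2e·k^(1/b))`. -/
theorem statement_3 (k b : ℕ) (hk : 1 ≤ k) (hb : 1 ≤ b)
    (β : ℕ) (hβ1 : 1 ≤ β) (hβb : β ≤ b)
    (w : ℕ) (hw1 : (k : ℝ) ^ (((β : ℝ) - 1) / b) ≤ (w : ℝ))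
    (hw2 : (w : ℝ) ≤ (k : ℝ) ^ ((β : ℝ) / b)) :
    1 / (2 * Real.exp 1 * (k : ℝ) ^ ((1 : ℝ) / b)) ≤
      (w : ℝ) * (k : ℝ) ^ (-(β : ℝ) / b) *
        (1 - (k : ℝ) ^ (-(β : ℝ) / b)) ^ (w - 1) := by
  have hexp1 : (1:ℝ) ≤ Real.exp 1 := by
    have := Real.add_one_le_exp (1:ℝ); linarith
  by_cases hk1 : k = 1
  · subst hk1
    simp only [Nat.cast_one, Real.one_rpow] at *
    have hw : w = 1 := by
      have : 1 ≤ w := by exact_mod_cast hw1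
      have : w ≤ 1 := by exact_mod_cast hw2
      omega
    subst hw
    simp only [Nat.sub_self, pow_zero, mul_one, one_mul]
    rw [Nat.cast_one, div_le_one (by positivity)]
    linarith
  · have hk2 : 2 ≤ k := by omega
    have hkR : (1:ℝ) < (k:ℝ) := by exact_mod_cast hk2
    have hk0 : (0:ℝ) < (k:ℝ) := by linarith
    have hb0 : (0:ℝ) < (b:ℝ) := by exact_mod_cast hb
    set p : ℝ := (k:ℝ) ^ (-(β:ℝ)/b) with hp
    have hp0 : 0 < p := Real.rpow_pos_of_pos hk0 _
    have hp1 : p < 1 := by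
      apply Real.rpow_lt_one_of_one_lt_of_neg hkR
      have hβ0 : (0:ℝ) < (β:ℝ) := by exact_mod_cast hβ1
      exact div_neg_of_neg_of_pos (by linarith) hb0
    have hpinv : p⁻¹ = (k:ℝ) ^ ((β:ℝ)/b) := by
      rw [hp, ← Real.rpow_neg hk0.le]
      ring_nf
    have hw1' : 1 ≤ w := by
      have h1 : (1:ℝ) ≤ (k:ℝ) ^ (((β:ℝ)-1)/b) := by
        apply Real.one_le_rpow hkR.le
        have hβ0 : (1:ℝ) ≤ (β:ℝ) := by exact_mod_cast hβ1
        exact div_nonneg (by linarith) hb0.le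
      have : (1:ℝ) ≤ (w:ℝ) := le_trans h1 hw1
      exact_mod_cast this
    -- w * p ≥ k^(-1/b)
    have hwp : (k:ℝ) ^ (-(1:ℝ)/b) ≤ (w:ℝ) * p := by
      have := mul_le_mul_of_nonneg_right hw1 hp0.le
      calc (k:ℝ) ^ (-(1:ℝ)/b) = (k:ℝ) ^ (((β:ℝ)-1)/b) * p := by
            rw [hp, ← Real.rpow_add hk0]; ring_nf
        _ ≤ (w:ℝ) * p := this
    -- (1-p)^(w-1) ≥ exp(-1)
    have ht0 : 0 < 1 - p := by linarith
    have hlog : Real.log (1-p) ≥ 1 - (1-p)⁻¹ := by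
      have := Real.log_le_sub_one_of_pos (x := (1-p)⁻¹) (by positivity)
      rw [Real.log_inv] at this
      linarith
    have hkey : (-1:ℝ) ≤ (p⁻¹ - 1) * Real.log (1-p) := by
      have h1 : (1-p) * Real.log (1-p) ≥ (1-p) * (1 - (1-p)⁻¹) := by
        apply mul_le_mul_of_nonneg_left hlog ht0.le
      have h2 : (1-p) * (1 - (1-p)⁻¹) = -p := by
        field_simp
        ring
      have h3 : (1-p) * Real.log (1-p) ≥ -p := by rw [h2] at h1; exact h1
      have h4 : (p⁻¹ - 1) * Real.log (1-p) = p⁻¹ * ((1-p) * Real.log (1-p)) := by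
        field_simp
      rw [h4]
      have := mul_le_mul_of_nonneg_left h3 (le_of_lt (inv_pos.mpr hp0))
      have h5 : p⁻¹ * (-p) = -1 := by field_simp
      linarith [h5 ▸ this]
    have hpow : Real.exp (-1) ≤ (1-p) ^ (w-1 : ℕ) := by
      have hcast : ((w - 1 : ℕ) : ℝ) = (w:ℝ) - 1 := by
        have : (1:ℕ) ≤ w := hw1'
        push_cast [this]; ring
      rw [← Real.rpow_natCast (1-p) (w-1), hcast]
      have hle : (w:ℝ) - 1 ≤ p⁻¹ - 1 := by
        rw [hpinv]; linarith
      calc Real.exp (-1) ≤ (1-p) ^ (p⁻¹ - 1) := by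
            rw [← Real.exp_log (Real.rpow_pos_of_pos ht0 _),
              Real.log_rpow ht0]
            exact Real.exp_le_exp.mpr hkey
        _ ≤ (1-p) ^ ((w:ℝ) - 1) :=
            Real.rpow_le_rpow_of_exponent_ge ht0 (by linarith) hle
    -- combine
    have hwp0 : 0 < (w:ℝ) * p := by
      have : (0:ℝ) < w := by exact_mod_cast hw1'
      positivity
    have hmain : (k:ℝ) ^ (-(1:ℝ)/b) * Real.exp (-1) ≤
        (w:ℝ) * p * (1-p) ^ (w-1 : ℕ) := by
      apply mul_le_mul hwp hpow (Real.exp_pos _).le hwp0.le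
    refine le_trans ?_ hmain
    rw [Real.exp_neg]
    rw [div_le_iff₀ (by positivity)]
    have hkb : (k:ℝ) ^ (-(1:ℝ)/b) * (k:ℝ) ^ ((1:ℝ)/b) = 1 := by
      rw [← Real.rpow_add hk0, show -(1:ℝ)/b + 1/b = 0 by ring, Real.rpow_zero]
    have hE : (0:ℝ) < Real.exp 1 := Real.exp_pos 1
    have : (k:ℝ) ^ (-(1:ℝ)/b) * (Real.exp 1)⁻¹ * (2 * Real.exp 1 * (k:ℝ) ^ ((1:ℝ)/b))
        = 2 := by
      field_simp
      rw [← neg_div]; exact hkb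
    rw [this]
    norm_num
end

section
/- Consider n stations and b channels with at most k stations activated, k known. Each station, starting from its activation, in every round transmits on each channel β ∈ {1,…,b} independently with probability k^{−β/b} (algorithm Channel-Screening). Let 0 < ε < 1 and let λ be an integer with λ ≥ 2e·k^{1/b}·ln(1/ε). For any activation pattern in which at every time step among the first λ time steps after the first activation the number of active stations W(t) satisfies 1 ≤ |W(t)| ≤ k, the probability that there exist a time step t among these λ time steps and a channel β on which exactly one active station transmits is at least 1 − ε. -/
open scoped Classical

/-- The probability, under independent Bernoulli bits indexed by `ι` where bit `i` equals
`true` with probability `q i`, of the event `E` of bit-configurations. -/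
noncomputable def bprob {ι : Type} [Fintype ι] [DecidableEq ι]
    (q : ι → ℝ) (E : (ι → Bool) → Prop) : ℝ :=
  ∑ f : ι → Bool, if E f then (∏ i, if f i then q i else 1 - q i) else 0

/-- `Wact σ t` is the set `W(t)` of stations active at time step `t`, for activation
pattern `σ` (`σ u = ⊤` means `u` is never activated). -/
noncomputable def Wact (n : ℕ) (σ : Fin n → ℕ∞) (t : ℕ) : Finset (Fin n) :=
  Finset.univ.filter fun u => σ u ≤ (t : ℕ∞)

/-- The time step of the first spontaneous activation under activation pattern `σ`. -/
noncomputable def firstAct (n : ℕ) (σ : Fin n → ℕ∞) : ℕ :=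
  sInf {t : ℕ | ∃ u, σ u = (t : ℕ∞)}

namespace CS

variable {ι : Type} [Fintype ι] [DecidableEq ι]

noncomputable def bwt (q : ι → ℝ) (f : ι → Bool) : ℝ :=
  ∏ i, if f i then q i else 1 - q i

lemma bprob_eq (q : ι → ℝ) (E : (ι → Bool) → Prop) :
    bprob q E = ∑ f : ι → Bool, if E f then bwt q f else 0 := rfl

lemma bwt_nonneg {q : ι → ℝ} (hq : ∀ i, 0 ≤ q i ∧ q i ≤ 1) (f : ι → Bool) :
    0 ≤ bwt q f := by
  apply Finset.prod_nonneg
  intro i _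
  by_cases h : f i <;> simp [h, (hq i).1, (hq i).2, sub_nonneg]

lemma sum_bwt (q : ι → ℝ) : ∑ f : ι → Bool, bwt q f = 1 := by
  have h := Finset.prod_univ_sum (fun _ : ι => (Finset.univ : Finset Bool))
      (fun i c => if c then q i else 1 - q i)
  rw [Fintype.piFinset_univ] at h
  have h2 : ∀ i : ι, (∑ c : Bool, if c then q i else 1 - q i) = 1 := by
    intro i
    rw [Fintype.sum_bool]
    simp
  rw [Finset.prod_congr rfl (fun i _ => h2 i), Finset.prod_const_one] at h
  exact h.symm

lemma bprob_congr {q : ι → ℝ} {E E' : (ι → Bool) → Prop} (h : ∀ f, E f ↔ E' f) :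
    bprob q E = bprob q E' := by
  unfold bprob
  exact Finset.sum_congr rfl fun f _ => by simp [h f]

lemma bprob_nonneg {q : ι → ℝ} (hq : ∀ i, 0 ≤ q i ∧ q i ≤ 1) (E : (ι → Bool) → Prop) :
    0 ≤ bprob q E := by
  rw [bprob_eq]
  apply Finset.sum_nonneg
  intro f _
  split
  · exact bwt_nonneg hq f
  · exact le_refl 0

lemma bprob_compl (q : ι → ℝ) (E : (ι → Bool) → Prop) :
    bprob q E = 1 - bprob q (fun f => ¬ E f) := by
  have key : bprob q E + bprob q (fun f => ¬ E f) = 1 := by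
    rw [bprob_eq, bprob_eq, ← Finset.sum_add_distrib, ← sum_bwt q]
    apply Finset.sum_congr rfl
    intro f _
    by_cases h : E f <;> simp [h]
  linarith

lemma bprob_mono {q : ι → ℝ} (hq : ∀ i, 0 ≤ q i ∧ q i ≤ 1)
    {E E' : (ι → Bool) → Prop} (h : ∀ f, E f → E' f) :
    bprob q E ≤ bprob q E' := by
  rw [bprob_eq, bprob_eq]
  apply Finset.sum_le_sum
  intro f _
  by_cases hf : E f
  · rw [if_pos hf, if_pos (h f hf)]
  · simp only [hf, if_false]
    split
    · exact bwt_nonneg hq f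
    · exact le_refl 0

lemma le_bprob_points {κ : Type} [Fintype κ] {q : ι → ℝ} (hq : ∀ i, 0 ≤ q i ∧ q i ≤ 1)
    {E : (ι → Bool) → Prop} (D : κ → (ι → Bool)) (hD : Function.Injective D)
    (hDE : ∀ a, E (D a)) :
    ∑ a : κ, bwt q (D a) ≤ bprob q E := by
  rw [bprob_eq]
  calc ∑ a : κ, bwt q (D a)
      = ∑ f ∈ Finset.univ.image D, if E f then bwt q f else 0 := by
        rw [Finset.sum_image (fun a _ a' _ h => hD h)]
        exact (Finset.sum_congr rfl fun a _ => by simp [hDE a]).symm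
    _ ≤ ∑ f : ι → Bool, if E f then bwt q f else 0 := by
        apply Finset.sum_le_sum_of_subset_of_nonneg (Finset.subset_univ _)
        intro f _ _
        split
        · exact bwt_nonneg hq f
        · exact le_refl 0

lemma bprob_reindex {κ : Type} [Fintype κ] [DecidableEq κ] (e : κ ≃ ι) (q : ι → ℝ)
    (E : (ι → Bool) → Prop) :
    bprob q E = bprob (fun a => q (e a)) (fun f => E (fun i => f (e.symm i))) := by
  rw [bprob_eq, bprob_eq]
  rw [← Equiv.sum_comp (Equiv.arrowCongr e (Equiv.refl Bool))
    (fun g => if E g then bwt q g else 0)]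
  apply Finset.sum_congr rfl
  intro f _
  have h1 : (Equiv.arrowCongr e (Equiv.refl Bool)) f = fun i => f (e.symm i) := rfl
  rw [h1]
  congr 1
  unfold bwt
  rw [← Equiv.prod_comp e (fun i => if f (e.symm i) then q i else 1 - q i)]
  apply Finset.prod_congr rfl
  intro a _
  simp

lemma bprob_pi {α γ : Type} [Fintype α] [Fintype γ] [DecidableEq α] [DecidableEq γ]
    (q : α × γ → ℝ) (E : α → (γ → Bool) → Prop) :
    bprob q (fun f => ∀ a, E a (fun c => f (a, c))) =
      ∏ a : α, bprob (fun c => q (a, c)) (E a) := by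
  have h := Finset.prod_univ_sum (fun _ : α => (Finset.univ : Finset (γ → Bool)))
      (fun a h => if E a h then bwt (fun c => q (a, c)) h else 0)
  rw [Fintype.piFinset_univ] at h
  rw [bprob_eq]
  simp only [bprob_eq]
  rw [h]
  apply Fintype.sum_equiv (Equiv.curry α γ Bool)
  intro f
  have hg : ∀ a, (Equiv.curry α γ Bool) f a = fun c => f (a, c) := fun a => rfl
  by_cases H : ∀ a, E a (fun c => f (a, c))
  · rw [if_pos H]
    rw [Finset.prod_congr rfl (fun a _ => by rw [hg a, if_pos (H a)])]
    unfold bwt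
    rw [Fintype.prod_prod_type]
  · rw [if_neg H]
    push_neg at H
    obtain ⟨a, ha⟩ := H
    exact (Finset.prod_eq_zero (Finset.mem_univ a) (by rw [hg a, if_neg ha])).symm

lemma bprob_sum_left {α γ : Type} [Fintype α] [Fintype γ] [DecidableEq α] [DecidableEq γ]
    (q : α ⊕ γ → ℝ) (E : (α → Bool) → Prop) :
    bprob q (fun f => E (fun a => f (Sum.inl a))) = bprob (fun a => q (Sum.inl a)) E := by
  rw [bprob_eq, bprob_eq]
  have step : (∑ f : α ⊕ γ → Bool, if E (fun a => f (Sum.inl a)) then bwt q f else 0)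
      = ∑ p : (α → Bool) × (γ → Bool),
          if E p.1 then bwt (fun a => q (Sum.inl a)) p.1 * bwt (fun c => q (Sum.inr c)) p.2
          else 0 := by
    apply Fintype.sum_equiv (Equiv.sumArrowEquivProdArrow α γ Bool)
    intro f
    have h1 : (fun a => f (Sum.inl a)) = ((Equiv.sumArrowEquivProdArrow α γ Bool) f).1 := rfl
    rw [← h1]
    congr 1
    unfold bwt
    rw [Fintype.prod_sum_type]
    rfl
  rw [step, Fintype.sum_prod_type]
  apply Finset.sum_congr rfl
  intro g _
  by_cases hE : E g
  · simp only [hE, if_true]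
    rw [← Finset.mul_sum, sum_bwt, mul_one]
  · simp [hE]

lemma bprob_restrict (p : ι → Prop) [DecidablePred p] (q : ι → ℝ)
    (E : ({x // p x} → Bool) → Prop) :
    bprob q (fun f => E (fun i => f i.1)) = bprob (fun i : {x // p x} => q i.1) E := by
  rw [bprob_reindex (Equiv.sumCompl p) q]
  have h1 : ∀ f : ({x // p x} ⊕ {x // ¬ p x}) → Bool,
      (fun i : {x // p x} => f ((Equiv.sumCompl p).symm i.1)) = (fun i => f (Sum.inl i)) := by
    intro f
    funext i
    rw [Equiv.sumCompl_symm_apply_of_pos i.2]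
  rw [bprob_congr (fun f => iff_of_eq (congrArg E (h1 f)))]
  rw [bprob_sum_left]
  congr 1

end CS

namespace CS2
open CS

lemma bprob_not {ι : Type} [Fintype ι] [DecidableEq ι] (q : ι → ℝ) (E : (ι → Bool) → Prop) :
    bprob q (fun f => ¬ E f) = 1 - bprob q E := by
  have := CS.bprob_compl q E
  linarith

lemma exp_neg_one_le_pow (m : ℕ) (p : ℝ) (hp0 : 0 ≤ p) (hmp : (m : ℝ) * p ≤ 1) (hm : 1 ≤ m) :
    (Real.exp 1)⁻¹ ≤ (1 - p) ^ (m - 1) := by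
  rcases Nat.lt_or_ge m 2 with h2 | h2
  · have hm1 : m = 1 := by omega
    subst hm1
    simp only [Nat.sub_self, pow_zero]
    exact inv_le_one_of_one_le₀ (Real.one_le_exp (by norm_num))
  · have hm2 : (2 : ℝ) ≤ (m : ℝ) := by exact_mod_cast h2
    have hp2 : p ≤ 1 / 2 := by nlinarith
    have h1p : 0 < 1 - p := by linarith
    set t := p / (1 - p) with ht
    have ht0 : 0 ≤ t := div_nonneg hp0 h1p.le
    have hinv : (1 - p)⁻¹ ≤ Real.exp t := by
      have h := Real.add_one_le_exp t
      have heq : t + 1 = (1 - p)⁻¹ := by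
        rw [ht, div_add' _ _ _ h1p.ne', eq_comm, inv_eq_iff_eq_inv, inv_div]
        congr 1
        ring
      linarith [heq ▸ h]
    have hexp : Real.exp (-t) ≤ 1 - p := by
      rw [Real.exp_neg]
      calc (Real.exp t)⁻¹ ≤ ((1 - p)⁻¹)⁻¹ := by
            apply inv_anti₀ (by positivity) hinv
        _ = 1 - p := inv_inv _
    have hpow : Real.exp (-t) ^ (m - 1) ≤ (1 - p) ^ (m - 1) :=
      pow_le_pow_left₀ (Real.exp_pos _).le hexp _
    have heq2 : Real.exp (-t) ^ (m - 1) = Real.exp (((m - 1 : ℕ) : ℝ) * (-t)) :=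
      (Real.exp_nat_mul _ _).symm
    have hcast : ((m - 1 : ℕ) : ℝ) = (m : ℝ) - 1 := by
      have := Nat.cast_sub (R := ℝ) hm
      simpa using this
    have hle : -1 ≤ ((m - 1 : ℕ) : ℝ) * (-t) := by
      rw [hcast]
      have hkey : ((m : ℝ) - 1) * t ≤ 1 := by
        rw [ht, ← mul_div_assoc, div_le_one h1p]
        nlinarith
      nlinarith
    calc (Real.exp 1)⁻¹ = Real.exp (-1) := (Real.exp_neg 1).symm
      _ ≤ Real.exp (((m - 1 : ℕ) : ℝ) * (-t)) := Real.exp_le_exp.2 hle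
      _ = Real.exp (-t) ^ (m - 1) := heq2.symm
      _ ≤ (1 - p) ^ (m - 1) := hpow

lemma numeric_bound (m : ℕ) (p c : ℝ) (hm : 1 ≤ m) (hp0 : 0 ≤ p) (hc0 : 0 ≤ c)
    (hmp : (m : ℝ) * p ≤ 1) (hc : c ≤ (m : ℝ) * p) :
    (Real.exp 1)⁻¹ * c ≤ (m : ℝ) * p * (1 - p) ^ (m - 1) := by
  have hkey := exp_neg_one_le_pow m p hp0 hmp hm
  have h1 : (0 : ℝ) ≤ (Real.exp 1)⁻¹ := by positivity
  calc (Real.exp 1)⁻¹ * c ≤ (1 - p) ^ (m - 1) * ((m : ℝ) * p) :=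
        mul_le_mul hkey hc hc0 (le_trans h1 hkey)
    _ = (m : ℝ) * p * (1 - p) ^ (m - 1) := by ring

lemma choose_beta (b k m : ℕ) (hb : 0 < b) (hk : 1 ≤ k) (hm : 1 ≤ m) (hmk : m ≤ k) :
    ∃ j₀ : ℕ, j₀ < b ∧
      (k : ℝ) ^ (-(1 : ℝ) / b) ≤ (m : ℝ) * (k : ℝ) ^ (-((j₀ : ℝ) + 1) / b) ∧
      (m : ℝ) * (k : ℝ) ^ (-((j₀ : ℝ) + 1) / b) ≤ 1 := by
  have hk0 : (0 : ℝ) < (k : ℝ) := by exact_mod_cast hk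
  have hm0 : (1 : ℝ) ≤ (m : ℝ) := by exact_mod_cast hm
  have hwit : (m : ℝ) ≤ (k : ℝ) ^ ((((b - 1 : ℕ) : ℝ) + 1) / b) := by
    have hcast : (((b - 1 : ℕ) : ℝ) + 1) / b = 1 := by
      rw [Nat.cast_sub hb]
      have hb0 : (b : ℝ) ≠ 0 := by positivity
      field_simp
      simp
    rw [hcast, Real.rpow_one]
    exact_mod_cast hmk
  have hex : ∃ j : ℕ, (m : ℝ) ≤ (k : ℝ) ^ (((j : ℝ) + 1) / b) := ⟨b - 1, hwit⟩
  set j₀ := Nat.find hex with hj₀def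
  have hspec : (m : ℝ) ≤ (k : ℝ) ^ (((j₀ : ℝ) + 1) / b) := Nat.find_spec hex
  have hj₀b : j₀ < b := lt_of_le_of_lt (Nat.find_min' hex hwit) (by omega)
  refine ⟨j₀, hj₀b, ?_, ?_⟩
  · rcases Nat.eq_zero_or_pos j₀ with h0 | hpos
    · rw [h0]
      have he : -(((0 : ℕ) : ℝ) + 1) / b = -(1 : ℝ) / b := by norm_num
      rw [he]
      nlinarith [Real.rpow_pos_of_pos hk0 (-(1 : ℝ) / (b : ℝ))]
    · obtain ⟨j, hj⟩ := Nat.exists_eq_succ_of_ne_zero (Nat.pos_iff_ne_zero.mp hpos)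
      have hmin : ¬ (m : ℝ) ≤ (k : ℝ) ^ (((j : ℝ) + 1) / b) :=
        Nat.find_min hex (by omega)
      push_neg at hmin
      have hcast : ((j : ℝ) + 1) = (j₀ : ℝ) := by
        rw [hj]; push_cast; ring
      rw [hcast] at hmin
      have h1 : (k : ℝ) ^ ((j₀ : ℝ) / b) * (k : ℝ) ^ (-((j₀ : ℝ) + 1) / b)
          = (k : ℝ) ^ (-(1 : ℝ) / b) := by
        rw [← Real.rpow_add hk0]
        congr 1
        ring
      calc (k : ℝ) ^ (-(1 : ℝ) / b)
          = (k : ℝ) ^ ((j₀ : ℝ) / b) * (k : ℝ) ^ (-((j₀ : ℝ) + 1) / b) := h1.symm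
        _ ≤ (m : ℝ) * (k : ℝ) ^ (-((j₀ : ℝ) + 1) / b) := by
            apply mul_le_mul_of_nonneg_right hmin.le (Real.rpow_nonneg hk0.le _)
  · have hiff : -((j₀ : ℝ) + 1) / b = -(((j₀ : ℝ) + 1) / b) := by ring
    rw [hiff, Real.rpow_neg hk0.le, ← div_eq_mul_inv, div_le_one (Real.rpow_pos_of_pos hk0 _)]
    exact hspec

lemma q_bounds (b k : ℕ) (hb : 0 < b) (hk : 1 ≤ k) (c : ℝ) (hc : 0 ≤ c) :
    0 ≤ (k : ℝ) ^ (-(c + 1) / b) ∧ (k : ℝ) ^ (-(c + 1) / b) ≤ 1 := by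
  have hk0 : (0 : ℝ) < (k : ℝ) := by exact_mod_cast hk
  constructor
  · exact Real.rpow_nonneg hk0.le _
  · apply Real.rpow_le_one_of_one_le_of_nonpos (by exact_mod_cast hk)
    apply div_nonpos_of_nonpos_of_nonneg
    · linarith
    · positivity

end CS2

namespace CS2
open CS

set_option maxHeartbeats 1000000 in
lemma slice_bound (n b k : ℕ) (hb : 0 < b) (hk : 1 ≤ k) (W : Finset (Fin n))
    (hW1 : 1 ≤ W.card) (hWk : W.card ≤ k) :
    (Real.exp 1)⁻¹ * (k : ℝ) ^ (-(1 : ℝ) / b) ≤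
      bprob (fun x : Fin n × Fin b => (k : ℝ) ^ (-(((x.2 : ℕ) : ℝ) + 1) / b))
        (fun g => ∃ β : Fin b, (W.filter fun u => g (u, β) = true).card = 1) := by
  have hk0 : (0 : ℝ) < (k : ℝ) := by exact_mod_cast hk
  set q : Fin n × Fin b → ℝ := fun x => (k : ℝ) ^ (-(((x.2 : ℕ) : ℝ) + 1) / b) with hqdef
  have hq : ∀ x, 0 ≤ q x ∧ q x ≤ 1 := fun x => q_bounds b k hb hk _ (by positivity)
  obtain ⟨j₀, hj₀b, hlb, hub⟩ := choose_beta b k W.card hb hk hW1 hWk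
  set β₀ : Fin b := ⟨j₀, hj₀b⟩ with hβ₀
  set p : ℝ := (k : ℝ) ^ (-((j₀ : ℝ) + 1) / b) with hpdef
  have hp0 : 0 < p := Real.rpow_pos_of_pos hk0 _
  have mono := bprob_mono hq
      (E := fun g : Fin n × Fin b → Bool => (W.filter fun u => g (u, β₀) = true).card = 1)
      (E' := fun g => ∃ β : Fin b, (W.filter fun u => g (u, β) = true).card = 1)
      (fun g h => ⟨β₀, h⟩)
  refine le_trans ?_ mono
  -- restrict to the coordinates (u, β₀), u ∈ W
  have hfilter : ∀ g : Fin n × Fin b → Bool,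
      ((Finset.univ.filter
          (fun i : {x : Fin n × Fin b // x.1 ∈ W ∧ x.2 = β₀} => g i.1 = true)).card
        = (W.filter fun u => g (u, β₀) = true).card) := by
    intro g
    apply Finset.card_bij (fun i _ => i.1.1)
    · intro i hi
      simp only [Finset.mem_filter, Finset.mem_univ, true_and] at hi ⊢
      refine ⟨i.2.1, ?_⟩
      have h1 : i.1 = (i.1.1, β₀) := Prod.ext rfl i.2.2
      rw [← h1]
      exact hi
    · intro i _ i' _ h
      apply Subtype.ext
      exact Prod.ext h (i.2.2.trans i'.2.2.symm)
    · intro u hu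
      simp only [Finset.mem_filter] at hu
      exact ⟨⟨(u, β₀), ⟨hu.1, rfl⟩⟩, Finset.mem_filter.2 ⟨Finset.mem_univ _, hu.2⟩, rfl⟩
  have hcongr : bprob q
      (fun g : Fin n × Fin b → Bool => (W.filter fun u => g (u, β₀) = true).card = 1)
      = bprob q (fun g => ((Finset.univ.filter
          (fun i : {x : Fin n × Fin b // x.1 ∈ W ∧ x.2 = β₀} => g i.1 = true)).card = 1)) :=
    bprob_congr (fun g => by rw [hfilter g])
  rw [hcongr]
  rw [bprob_restrict (fun x : Fin n × Fin b => x.1 ∈ W ∧ x.2 = β₀) q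
      (fun h => ((Finset.univ.filter (fun i => h i = true)).card = 1))]
  -- now a computation on the subtype, where all probabilities equal p
  set m := W.card with hm
  have hq' : ∀ i : {x : Fin n × Fin b // x.1 ∈ W ∧ x.2 = β₀}, q i.1 = p := by
    intro i
    show (k : ℝ) ^ (-(((i.1.2 : ℕ) : ℝ) + 1) / b) = p
    have h2 : (i.1.2 : ℕ) = j₀ := by rw [i.2.2]
    rw [h2, hpdef]
  have hcard : Fintype.card {x : Fin n × Fin b // x.1 ∈ W ∧ x.2 = β₀} = m := by
    rw [hm, ← Fintype.card_coe W]
    exact Fintype.card_congr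
      ⟨fun i => ⟨i.1.1, i.2.1⟩, fun u => ⟨(u.1, β₀), ⟨u.2, rfl⟩⟩,
        fun i => Subtype.ext (Prod.ext rfl i.2.2.symm), fun u => rfl⟩
  have hqsub : ∀ i : {x : Fin n × Fin b // x.1 ∈ W ∧ x.2 = β₀},
      0 ≤ q i.1 ∧ q i.1 ≤ 1 := fun i => hq i.1
  have hDE : ∀ i : {x : Fin n × Fin b // x.1 ∈ W ∧ x.2 = β₀},
      ((Finset.univ.filter (fun j => (decide (j = i)) = true)).card = 1) := by
    intro i
    have h1 : (Finset.univ.filter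
        (fun j : {x : Fin n × Fin b // x.1 ∈ W ∧ x.2 = β₀} => (decide (j = i)) = true)) = {i} := by
      ext j
      simp
    rw [h1, Finset.card_singleton]
  have hinj : Function.Injective
      (fun (i : {x : Fin n × Fin b // x.1 ∈ W ∧ x.2 = β₀}) (j : _) => decide (j = i)) := by
    intro i i' h
    have h2 := congrFun h i
    simpa using h2
  have hpts := le_bprob_points (q := fun i : {x : Fin n × Fin b // x.1 ∈ W ∧ x.2 = β₀} => q i.1)
      hqsub (E := fun h => ((Finset.univ.filter (fun i => h i = true)).card = 1))
      (D := fun i j => decide (j = i)) hinj hDE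
  have hbwt : ∀ i : {x : Fin n × Fin b // x.1 ∈ W ∧ x.2 = β₀},
      bwt (fun i : {x : Fin n × Fin b // x.1 ∈ W ∧ x.2 = β₀} => q i.1) (fun j => decide (j = i))
        = p * (1 - p) ^ (m - 1) := by
    intro i
    unfold bwt
    have hfac : ∀ j : {x : Fin n × Fin b // x.1 ∈ W ∧ x.2 = β₀},
        (if (decide (j = i)) = true then q j.1 else 1 - q j.1)
          = if j = i then p else 1 - p := by
      intro j
      by_cases h : j = i
      · subst h; simp [hq' j]
      · simp [h, hq' j]
    rw [Finset.prod_congr rfl (fun j _ => hfac j)]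
    rw [← Finset.mul_prod_erase Finset.univ _ (Finset.mem_univ i), if_pos rfl]
    congr 1
    rw [Finset.prod_congr rfl (fun j hj => if_neg (Finset.ne_of_mem_erase hj))]
    rw [Finset.prod_const, Finset.card_erase_of_mem (Finset.mem_univ i),
      Finset.card_univ, hcard]
  have hsum : (∑ i : {x : Fin n × Fin b // x.1 ∈ W ∧ x.2 = β₀},
      bwt (fun i : {x : Fin n × Fin b // x.1 ∈ W ∧ x.2 = β₀} => q i.1) (fun j => decide (j = i)))
        = (m : ℝ) * (p * (1 - p) ^ (m - 1)) := by
    rw [Finset.sum_congr rfl (fun i _ => hbwt i), Finset.sum_const, Finset.card_univ, hcard,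
      nsmul_eq_mul]
  refine le_trans ?_ hpts
  rw [hsum]
  have hnum := numeric_bound m p ((k : ℝ) ^ (-(1 : ℝ) / b)) hW1 hp0.le
      (Real.rpow_nonneg hk0.le _) hub hlb
  calc (Real.exp 1)⁻¹ * (k : ℝ) ^ (-(1 : ℝ) / b)
      ≤ (m : ℝ) * p * (1 - p) ^ (m - 1) := hnum
    _ = (m : ℝ) * (p * (1 - p) ^ (m - 1)) := by ring

end CS2

def roundEquiv (n b lam : ℕ) : (Fin lam × (Fin n × Fin b)) ≃ (Fin n × Fin b × Fin lam) where
  toFun y := (y.2.1, y.2.2, y.1)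
  invFun x := (x.2.2, (x.1, x.2.1))
  left_inv y := rfl
  right_inv x := rfl


set_option maxHeartbeats 1000000 in
/-- Algorithm Channel-Screening: with `n` stations, `b` channels, at most `k` stations
activated (`k` known), every active station in every round transmits on each channel
`β ∈ {1,…,b}` independently with probability `k^(−β/b)`.  If `0 < ε < 1` and
`λ ≥ 2e·k^(1/b)·ln(1/ε)`, then for any activation pattern in which at each of the first `λ`
time steps after the first activation the set of active stations `W(t)` satisfies
`1 ≤ |W(t)| ≤ k`, the probability that at some of these `λ` time steps exactly one active
station transmits on some channel is at least `1 − ε`. -/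
theorem statement_4 (n b k : ℕ) (hn : 0 < n) (hb : 0 < b) (hk : 1 ≤ k) (hkn : k ≤ n)
    (ε : ℝ) (hε0 : 0 < ε) (hε1 : ε < 1)
    (lam : ℕ)
    (hlam : 2 * Real.exp 1 * (k : ℝ) ^ ((1 : ℝ) / b) * Real.log (1 / ε) ≤ (lam : ℝ))
    (σ : Fin n → ℕ∞) (hact : ∃ u, σ u ≠ ⊤)
    (hW : ∀ t : ℕ, firstAct n σ ≤ t → t < firstAct n σ + lam →
      1 ≤ (Wact n σ t).card ∧ (Wact n σ t).card ≤ k) :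
    1 - ε ≤
      bprob (fun x : Fin n × Fin b × Fin lam => (k : ℝ) ^ (-(((x.2.1 : ℕ) : ℝ) + 1) / b))
        (fun f => ∃ (j : Fin lam) (β : Fin b),
          ((Wact n σ (firstAct n σ + (j : ℕ))).filter fun u => f (u, β, j) = true).card = 1) := by
  have hk0 : (0 : ℝ) < (k : ℝ) := by exact_mod_cast hk
  have hL : 0 < Real.log (1 / ε) := Real.log_pos (one_lt_one_div hε0 hε1)
  set c : ℝ := (Real.exp 1)⁻¹ * (k : ℝ) ^ (-(1 : ℝ) / b) with hc
  have hKpos : (0 : ℝ) < (k : ℝ) ^ (-(1 : ℝ) / b) := Real.rpow_pos_of_pos hk0 _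
  have hc0 : 0 < c := by positivity
  have hc1 : c ≤ 1 := by
    have h1 : (k : ℝ) ^ (-(1 : ℝ) / b) ≤ 1 := by
      apply Real.rpow_le_one_of_one_le_of_nonpos (by exact_mod_cast hk)
      apply div_nonpos_of_nonpos_of_nonneg <;> [norm_num; positivity]
    have h2 : (Real.exp 1)⁻¹ ≤ 1 := inv_le_one_of_one_le₀ (Real.one_le_exp (by norm_num))
    nlinarith
  -- per round bound
  have hround : ∀ j : Fin lam,
      bprob (fun x : Fin n × Fin b => (k : ℝ) ^ (-(((x.2 : ℕ) : ℝ) + 1) / b))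
        (fun h => ¬ ∃ β : Fin b, ((Wact n σ (firstAct n σ + (j : ℕ))).filter
          fun u => h (u, β) = true).card = 1) ≤ 1 - c := by
    intro j
    have hWj := hW (firstAct n σ + (j : ℕ)) (Nat.le_add_right _ _)
      (by have := j.isLt; omega)
    have hs := CS2.slice_bound n b k hb hk (Wact n σ (firstAct n σ + (j : ℕ))) hWj.1 hWj.2
    have hcompl := CS2.bprob_not (fun x : Fin n × Fin b => (k : ℝ) ^ (-(((x.2 : ℕ) : ℝ) + 1) / b))
      (fun h => ∃ β : Fin b, ((Wact n σ (firstAct n σ + (j : ℕ))).filter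
        fun u => h (u, β) = true).card = 1)
    calc bprob _ (fun h => ¬ ∃ β : Fin b, ((Wact n σ (firstAct n σ + (j : ℕ))).filter
          fun u => h (u, β) = true).card = 1)
        = 1 - bprob _ (fun h => ∃ β : Fin b, ((Wact n σ (firstAct n σ + (j : ℕ))).filter
          fun u => h (u, β) = true).card = 1) := hcompl
      _ ≤ 1 - c := by rw [hc]; linarith
  -- the failure probability over all rounds
  have hprod :
      bprob (fun y : Fin lam × (Fin n × Fin b) =>
          (k : ℝ) ^ (-(((y.2.2 : ℕ) : ℝ) + 1) / b))
        (fun f => ∀ j : Fin lam, ¬ ∃ β : Fin b,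
          ((Wact n σ (firstAct n σ + (j : ℕ))).filter fun u => f (j, (u, β)) = true).card = 1)
      ≤ ε := by
    have hpi := CS.bprob_pi (α := Fin lam) (γ := Fin n × Fin b)
      (fun y => (k : ℝ) ^ (-(((y.2.2 : ℕ) : ℝ) + 1) / b))
      (fun j h => ¬ ∃ β : Fin b,
        ((Wact n σ (firstAct n σ + (j : ℕ))).filter fun u => h (u, β) = true).card = 1)
    calc bprob (fun y : Fin lam × (Fin n × Fin b) =>
            (k : ℝ) ^ (-(((y.2.2 : ℕ) : ℝ) + 1) / b))
          (fun f => ∀ j : Fin lam, ¬ ∃ β : Fin b,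
            ((Wact n σ (firstAct n σ + (j : ℕ))).filter fun u => f (j, (u, β)) = true).card = 1)
        = ∏ j : Fin lam, bprob (fun c : Fin n × Fin b =>
              (k : ℝ) ^ (-(((c.2 : ℕ) : ℝ) + 1) / b))
            (fun h => ¬ ∃ β : Fin b,
              ((Wact n σ (firstAct n σ + (j : ℕ))).filter fun u => h (u, β) = true).card = 1) := by
          exact hpi
      _ ≤ ∏ _j : Fin lam, (1 - c) := by
          apply Finset.prod_le_prod
          · intro j _
            exact CS.bprob_nonneg (fun x => CS2.q_bounds b k hb hk _ (by positivity)) _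
          · intro j _
            exact hround j
      _ = (1 - c) ^ lam := by
          rw [Finset.prod_const, Finset.card_univ, Fintype.card_fin]
      _ ≤ Real.exp (-c) ^ lam := by
          apply pow_le_pow_left₀ (by linarith)
          nlinarith [Real.add_one_le_exp (-c)]
      _ = Real.exp (-(c * lam)) := by
          rw [← Real.exp_nat_mul]
          ring_nf
      _ ≤ ε := by
          have hkey : Real.log (1 / ε) ≤ c * lam := by
            have hmul := mul_le_mul_of_nonneg_left hlam hc0.le
            have hid : c * (2 * Real.exp 1 * (k : ℝ) ^ ((1 : ℝ) / b) * Real.log (1 / ε))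
                = 2 * Real.log (1 / ε) := by
              have e1 : (Real.exp 1)⁻¹ * Real.exp 1 = 1 := inv_mul_cancel₀ (Real.exp_ne_zero 1)
              have e2 : (k : ℝ) ^ (-(1 : ℝ) / b) * (k : ℝ) ^ ((1 : ℝ) / b) = 1 := by
                rw [← Real.rpow_add hk0, show -(1:ℝ)/(b:ℝ) + (1:ℝ)/(b:ℝ) = 0 by ring,
                  Real.rpow_zero]
              calc c * (2 * Real.exp 1 * (k : ℝ) ^ ((1 : ℝ) / b) * Real.log (1 / ε))
                  = 2 * Real.log (1 / ε) * ((Real.exp 1)⁻¹ * Real.exp 1)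
                    * ((k : ℝ) ^ (-(1 : ℝ) / b) * (k : ℝ) ^ ((1 : ℝ) / b)) := by
                    rw [hc]; ring
                _ = 2 * Real.log (1 / ε) := by rw [e1, e2]; ring
            rw [hid] at hmul
            linarith
          have hlog : Real.log ε = - Real.log (1 / ε) := by
            rw [one_div, Real.log_inv]
            ring
          calc Real.exp (-(c * lam)) ≤ Real.exp (Real.log ε) := by
                apply Real.exp_le_exp.2
                rw [hlog]
                linarith
            _ = ε := Real.exp_log hε0
  -- reindex and take complements
  have h1 : bprob (fun x : Fin n × Fin b × Fin lam => (k : ℝ) ^ (-(((x.2.1 : ℕ) : ℝ) + 1) / b))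
        (fun f => ∃ (j : Fin lam) (β : Fin b),
          ((Wact n σ (firstAct n σ + (j : ℕ))).filter fun u => f (u, β, j) = true).card = 1)
      = 1 - bprob (fun y : Fin lam × (Fin n × Fin b) =>
          (k : ℝ) ^ (-(((y.2.2 : ℕ) : ℝ) + 1) / b))
        (fun f => ∀ j : Fin lam, ¬ ∃ β : Fin b,
          ((Wact n σ (firstAct n σ + (j : ℕ))).filter fun u => f (j, (u, β)) = true).card = 1) := by
    rw [CS.bprob_reindex (roundEquiv n b lam)
      (fun x : Fin n × Fin b × Fin lam => (k : ℝ) ^ (-(((x.2.1 : ℕ) : ℝ) + 1) / b)) _]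
    rw [CS.bprob_compl]
    congr 1
    exact CS.bprob_congr (fun f => not_exists)
  rw [h1]
  linarith
end

section
/- Suppose at most k ≤ n stations are ever activated. Suppose [t₁,t₂] is an interval of size φ(ω−1), for some 1 ≤ ω ≤ log₂ k, such that for every time step j ∈ [t₁,t₂]: (a') |W_ω(j)| ≥ 2^ω, and (b') |W_i(j)| = 0 for every i > ω. Then there exists an ω'-balanced interval for some ω ≤ ω' ≤ log₂ k. -/
open scoped Classical

/-- `phi c n b i = ⌈c·2^i·i^(1/b)·log₂ n⌉` for `i ≥ 1`, and `phi c n b 0 = 0`. -/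
noncomputable def phi (c : ℝ) (n b i : ℕ) : ℕ :=
  if i = 0 then 0 else ⌈c * 2 ^ i * (i : ℝ) ^ ((1 : ℝ) / b) * Real.logb 2 n⌉₊

/-- `gam c n b 0 = 0` and `gam c n b i = phi c n b (i+1)` for `i ≥ 1` (the `γ_i`). -/
noncomputable def gam (c : ℝ) (n b i : ℕ) : ℕ :=
  if i = 0 then 0 else phi c n b (i + 1)

/-- `Wstage c n b σ i j` is the set `W_i(j)` of stations in stage `i` at time step `j`:
those stations `u` with `σ_u + γ_(i−1) ≤ j ≤ σ_u + γ_i − 1`. -/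
noncomputable def Wstage (c : ℝ) (n b : ℕ) (σ : Fin n → ℕ∞) (i j : ℕ) : Finset (Fin n) :=
  Finset.univ.filter fun u =>
    σ u + (gam c n b (i - 1) : ℕ∞) ≤ (j : ℕ∞) ∧ (j : ℕ∞) < σ u + (gam c n b i : ℕ∞)

/-- A time step `j` is `ω`-balanced when `2^ω ≤ |W_ω(j)| ≤ 2^(ω+2)` and `|W_i(j)| = 0` for
every `i > ω`. -/
def balancedStep (c : ℝ) (n b : ℕ) (σ : Fin n → ℕ∞) (ω j : ℕ) : Prop :=
  2 ^ ω ≤ (Wstage c n b σ ω j).card ∧ (Wstage c n b σ ω j).card ≤ 2 ^ (ω + 2) ∧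
    ∀ i, ω < i → (Wstage c n b σ i j).card = 0

/-- An interval `[t₁,t₂]` of size `phi c n b (ω−1)` is `ω`-balanced when all its time steps
are `ω`-balanced. -/
def balancedInterval (c : ℝ) (n b : ℕ) (σ : Fin n → ℕ∞) (ω t₁ t₂ : ℕ) : Prop :=
  t₂ + 1 = t₁ + phi c n b (ω - 1) ∧ ∀ j ∈ Finset.Icc t₁ t₂, balancedStep c n b σ ω j

/-- `Psi c n b k σ j = Σ_{i=1}^{log₂ k} |W_i(j)|/2^i`. -/
noncomputable def Psi (c : ℝ) (n b k : ℕ) (σ : Fin n → ℕ∞) (j : ℕ) : ℝ :=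
  ∑ i ∈ Finset.Icc 1 (Nat.log 2 k), ((Wstage c n b σ i j).card : ℝ) / 2 ^ i

/-- An `ω`-balanced interval `[t₁,t₂]` is `ω`-light when (1) `|⋃_{i=1}^{ω} W_i(j)| ≤ 2^(ω+4)`
for every `j ∈ [t₁,t₂]`, and (2) `[t₁,t₂]` contains at least `phi c n b (ω−2)` time steps `j`
with `1 ≤ Ψ(j) ≤ 128·ω`. -/
def lightInterval (c : ℝ) (n b k : ℕ) (σ : Fin n → ℕ∞) (ω t₁ t₂ : ℕ) : Prop :=
  balancedInterval c n b σ ω t₁ t₂ ∧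
    (∀ j ∈ Finset.Icc t₁ t₂,
      ((Finset.Icc 1 ω).biUnion fun i => Wstage c n b σ i j).card ≤ 2 ^ (ω + 4)) ∧
    phi c n b (ω - 2) ≤ ((Finset.Icc t₁ t₂).filter fun j =>
      1 ≤ Psi c n b k σ j ∧ Psi c n b k σ j ≤ 128 * (ω : ℝ)).card

section helpers

variable {c : ℝ} {n b : ℕ}

private lemma phi_mono (hc : 0 < c) (hn : 1 ≤ n) : Monotone (phi c n b) := by
  apply monotone_nat_of_le_succ
  intro i
  rcases Nat.eq_zero_or_pos i with h | h
  · simp [phi, h]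
  · have hL : (0:ℝ) ≤ Real.logb 2 n :=
      Real.logb_nonneg one_lt_two (by exact_mod_cast hn)
    simp only [phi, if_neg h.ne', if_neg (Nat.succ_ne_zero i)]
    apply Nat.ceil_mono
    have h1 : ((i:ℝ)) ^ ((1:ℝ)/b) ≤ ((i+1:ℕ):ℝ) ^ ((1:ℝ)/b) := by
      apply Real.rpow_le_rpow (by positivity) (by exact_mod_cast Nat.le_succ i) (by positivity)
    gcongr
    · exact one_le_two
    · exact Nat.le_succ i

private lemma phi_double (hc : 0 < c) (hn : 1 ≤ n) {i : ℕ} (hi : 1 ≤ i) :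
    2 * phi c n b i ≤ phi c n b (i+1) + 1 := by
  have hL : (0:ℝ) ≤ Real.logb 2 n :=
    Real.logb_nonneg one_lt_two (by exact_mod_cast hn)
  set x := c * 2 ^ i * (i:ℝ) ^ ((1:ℝ)/b) * Real.logb 2 n with hxdef
  set y := c * 2 ^ (i+1) * ((i+1:ℕ):ℝ) ^ ((1:ℝ)/b) * Real.logb 2 n with hydef
  have hx : 0 ≤ x := by positivity
  have hxy : 2 * x ≤ y := by
    have h1 : ((i:ℝ)) ^ ((1:ℝ)/b) ≤ ((i+1:ℕ):ℝ) ^ ((1:ℝ)/b) := by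
      apply Real.rpow_le_rpow (by positivity) (by exact_mod_cast Nat.le_succ i) (by positivity)
    have h2 : 2 * x = c * 2 ^ (i+1) * ((i:ℝ)) ^ ((1:ℝ)/b) * Real.logb 2 n := by
      rw [hxdef]; ring
    rw [h2, hydef]
    gcongr
  have hpx : phi c n b i = ⌈x⌉₊ := by rw [phi, if_neg (by omega : i ≠ 0)]
  have hpy : phi c n b (i+1) = ⌈y⌉₊ := by rw [phi, if_neg (Nat.succ_ne_zero i)]
  have h1 : (⌈x⌉₊ : ℝ) < x + 1 := Nat.ceil_lt_add_one hx
  have h2 : y ≤ (⌈y⌉₊ : ℝ) := Nat.le_ceil y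
  have h3 : (2 * ⌈x⌉₊ : ℝ) < (⌈y⌉₊ : ℝ) + 2 := by linarith
  have h4 : 2 * ⌈x⌉₊ < ⌈y⌉₊ + 2 := by exact_mod_cast h3
  omega

private lemma phi_pos (hc : 0 < c) (hn2 : 2 ≤ n) {i : ℕ} (hi : 1 ≤ i) :
    1 ≤ phi c n b i := by
  rw [phi, if_neg (by omega : i ≠ 0)]
  have hL : (0:ℝ) < Real.logb 2 n :=
    Real.logb_pos one_lt_two (by exact_mod_cast hn2)
  have hip : (0:ℝ) < (i:ℝ) := by exact_mod_cast hi
  have hpos : (0:ℝ) < c * 2 ^ i * (i:ℝ) ^ ((1:ℝ)/b) * Real.logb 2 n := by positivity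
  exact Nat.one_le_iff_ne_zero.mpr (by positivity)

private lemma gam_zero : gam c n b 0 = 0 := rfl

private lemma gam_eq {i : ℕ} (hi : i ≠ 0) : gam c n b i = phi c n b (i+1) := if_neg hi

private lemma gam_mono (hc : 0 < c) (hn : 1 ≤ n) : Monotone (gam c n b) := by
  apply monotone_nat_of_le_succ
  intro i
  rcases Nat.eq_zero_or_pos i with h | h
  · simp [h, gam_zero]
  · rw [gam_eq h.ne', gam_eq (Nat.succ_ne_zero i)]
    exact phi_mono hc hn (Nat.le_succ _)

variable {σ : Fin n → ℕ∞}

private lemma ne_top_of_mem {i j : ℕ} {u : Fin n} (h : u ∈ Wstage c n b σ i j) :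
    σ u ≠ ⊤ := by
  simp only [Wstage, Finset.mem_filter, Finset.mem_univ, true_and] at h
  intro ht
  have h1 := h.1
  rw [ht, top_add, top_le_iff] at h1
  exact (ENat.coe_ne_top j) h1

private lemma mem_Wstage_iff {i j : ℕ} {u : Fin n} {s : ℕ} (hs : σ u = (s : ℕ∞)) :
    u ∈ Wstage c n b σ i j ↔ s + gam c n b (i-1) ≤ j ∧ j < s + gam c n b i := by
  simp only [Wstage, Finset.mem_filter, Finset.mem_univ, true_and, hs]
  constructor
  · rintro ⟨h1, h2⟩; exact ⟨by exact_mod_cast h1, by exact_mod_cast h2⟩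
  · rintro ⟨h1, h2⟩; exact ⟨by exact_mod_cast h1, by exact_mod_cast h2⟩

/-- The key step: if some step of the interval has too many stage-`ω` stations, then there is
an interval of size `phi c n b ω` satisfying hypotheses (a') and (b') at level `ω+1`. -/
private lemma step_up (hn2 : 2 ≤ n) (hc : 0 < c)
    {ω t₁ t₂ : ℕ} (hω : 2 ≤ ω)
    (hsize : t₂ + 1 = t₁ + phi c n b (ω - 1))
    (hz : ∀ j ∈ Finset.Icc t₁ t₂, ∀ i, ω < i → (Wstage c n b σ i j).card = 0)
    {j₀ : ℕ} (hj₀ : j₀ ∈ Finset.Icc t₁ t₂)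
    (hbig : 2 ^ (ω+2) < (Wstage c n b σ ω j₀).card) :
    ∃ t₁' t₂', t₂' + 1 = t₁' + phi c n b ω ∧
      (∀ j ∈ Finset.Icc t₁' t₂', 2 ^ (ω+1) ≤ (Wstage c n b σ (ω+1) j).card) ∧
      (∀ j ∈ Finset.Icc t₁' t₂', ∀ i, ω+1 < i → (Wstage c n b σ i j).card = 0) := by
  have hn1 : 1 ≤ n := by omega
  rw [Finset.mem_Icc] at hj₀
  -- abbreviations and arithmetic facts
  have hg1 : gam c n b (ω - 1) = phi c n b ω := by
    rw [gam_eq (by omega : ω - 1 ≠ 0)]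
    congr 1
    omega
  have hg2 : gam c n b ω = phi c n b (ω+1) := gam_eq (by omega)
  have hg3 : gam c n b (ω+1) = phi c n b (ω+2) := gam_eq (by omega)
  have hm1 : phi c n b (ω-1) ≤ phi c n b ω := phi_mono hc hn1 (by omega)
  have hm2 : phi c n b ω ≤ phi c n b (ω+1) := phi_mono hc hn1 (by omega)
  have hm3 : phi c n b (ω+1) ≤ phi c n b (ω+2) := phi_mono hc hn1 (by omega)
  have hd1 : 2 * phi c n b ω ≤ phi c n b (ω+1) + 1 := phi_double hc hn1 (by omega)
  have hd2 : 2 * phi c n b (ω+1) ≤ phi c n b (ω+2) + 1 := phi_double hc hn1 (by omega)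
  have hp1 : 1 ≤ phi c n b ω := phi_pos hc hn2 (by omega)
  set t₁' := j₀ + (phi c n b (ω+1) - phi c n b ω) with ht₁'
  set t₂' := t₁' + phi c n b ω - 1 with ht₂'
  have hcov : t₂' ≤ j₀ + (phi c n b (ω+2) - phi c n b (ω+1)) := by omega
  have ht2le : t₂ ≤ t₁' := by omega
  -- every member of `W_ω(j₀)` is in `W_(ω+1)(j)` for each `j` in the new interval
  have hsub : ∀ j ∈ Finset.Icc t₁' t₂', Wstage c n b σ ω j₀ ⊆ Wstage c n b σ (ω+1) j := by
    intro j hj u hu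
    rw [Finset.mem_Icc] at hj
    obtain ⟨s, hs⟩ : ∃ s : ℕ, σ u = (s : ℕ∞) :=
      ⟨(σ u).toNat, (ENat.coe_toNat (ne_top_of_mem hu)).symm⟩
    rw [mem_Wstage_iff hs] at hu
    rw [mem_Wstage_iff hs]
    rw [hg1, hg2] at hu
    rw [show ω + 1 - 1 = ω from rfl, hg2, hg3]
    omega
  have hcard : ∀ j ∈ Finset.Icc t₁' t₂', 2 ^ (ω+1) ≤ (Wstage c n b σ (ω+1) j).card := by
    intro j hj
    calc 2 ^ (ω+1) ≤ 2 ^ (ω+2) := Nat.pow_le_pow_right (by norm_num) (by omega)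
    _ ≤ (Wstage c n b σ ω j₀).card := hbig.le
    _ ≤ (Wstage c n b σ (ω+1) j).card := Finset.card_le_card (hsub j hj)
  refine ⟨t₁', t₂', by omega, hcard, ?_⟩
  -- no stations in stages above `ω+1` in the new interval
  intro j hj i hi
  rw [Finset.mem_Icc] at hj
  rw [Finset.card_eq_zero, Finset.eq_empty_iff_forall_notMem]
  intro u hu
  obtain ⟨s, hs⟩ : ∃ s : ℕ, σ u = (s : ℕ∞) :=
    ⟨(σ u).toNat, (ENat.coe_toNat (ne_top_of_mem hu)).symm⟩
  rw [mem_Wstage_iff hs] at hu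
  have hgi : gam c n b (ω+1) ≤ gam c n b (i-1) := gam_mono hc hn1 (by omega)
  -- `u` entered stage `ω+1` already by time `t₂`
  have hst : s + gam c n b ω ≤ t₂ := by
    rw [hg2, hg3] at *
    omega
  -- find the stage of `u` at time `t₂`
  have hwit : t₂ < s + gam c n b i := by
    have : t₂ ≤ j := le_trans ht2le hj.1
    omega
  have hex : ∃ m, t₂ < s + gam c n b m := ⟨i, hwit⟩
  set m := Nat.find hex with hm
  have hspec : t₂ < s + gam c n b m := Nat.find_spec hex
  have hωm : ω < m := by
    by_contra h
    push_neg at h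
    have : gam c n b m ≤ gam c n b ω := gam_mono hc hn1 h
    omega
  have hmin : s + gam c n b (m-1) ≤ t₂ := by
    have h1 : m - 1 < m := by omega
    have := Nat.find_min hex h1
    omega
  have humem : u ∈ Wstage c n b σ m t₂ := by
    rw [mem_Wstage_iff hs]
    exact ⟨hmin, hspec⟩
  have hcard0 := hz t₂ (Finset.mem_Icc.mpr ⟨by omega, le_refl _⟩) m hωm
  rw [Finset.card_eq_zero, Finset.eq_empty_iff_forall_notMem] at hcard0
  exact hcard0 u humem

private lemma aux_ind (k : ℕ) (hn2 : 2 ≤ n) (hk2 : 2 ≤ k) (hc : 0 < c)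
    (hmost : (Finset.univ.filter fun u => σ u ≠ ⊤).card ≤ k) :
    ∀ d ω t₁ t₂, Nat.log 2 k - ω ≤ d → 1 ≤ ω → ω ≤ Nat.log 2 k →
      t₂ + 1 = t₁ + phi c n b (ω - 1) →
      (∀ j ∈ Finset.Icc t₁ t₂, 2 ^ ω ≤ (Wstage c n b σ ω j).card) →
      (∀ j ∈ Finset.Icc t₁ t₂, ∀ i, ω < i → (Wstage c n b σ i j).card = 0) →
      ∃ ω' t₁' t₂' : ℕ, ω ≤ ω' ∧ ω' ≤ Nat.log 2 k ∧
        balancedInterval c n b σ ω' t₁' t₂' := by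
  have key : ∀ d, (∀ ω t₁ t₂, Nat.log 2 k - ω ≤ d → 1 ≤ ω → ω ≤ Nat.log 2 k →
      t₂ + 1 = t₁ + phi c n b (ω - 1) →
      (∀ j ∈ Finset.Icc t₁ t₂, 2 ^ ω ≤ (Wstage c n b σ ω j).card) →
      (∀ j ∈ Finset.Icc t₁ t₂, ∀ i, ω < i → (Wstage c n b σ i j).card = 0) →
      ∃ ω' t₁' t₂' : ℕ, ω ≤ ω' ∧ ω' ≤ Nat.log 2 k ∧
        balancedInterval c n b σ ω' t₁' t₂') := by
    intro d
    induction d with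
    | zero =>
      intro ω t₁ t₂ hd h1 h2 hsize ha hz
      rcases eq_or_lt_of_le h1 with heq | hgt
      · -- ω = 1 : the empty interval of size phi 0 = 0 is balanced
        refine ⟨ω, 1, 0, le_refl _, h2, ?_, ?_⟩
        · rw [← heq]; simp [phi]
        · intro j hj; simp at hj
      by_cases hall : ∀ j ∈ Finset.Icc t₁ t₂, (Wstage c n b σ ω j).card ≤ 2 ^ (ω+2)
      · exact ⟨ω, t₁, t₂, le_refl _, h2, hsize,
          fun j hj => ⟨ha j hj, hall j hj, hz j hj⟩⟩
      · exfalso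
        push_neg at hall
        obtain ⟨j₀, hj₀, hbig⟩ := hall
        have hsubk : (Wstage c n b σ ω j₀).card ≤ k := by
          refine le_trans (Finset.card_le_card ?_) hmost
          intro u hu
          simp only [Finset.mem_filter, Finset.mem_univ, true_and]
          exact ne_top_of_mem hu
        have hωL : ω = Nat.log 2 k := by omega
        have hk' : k < 2 ^ (Nat.log 2 k + 1) := Nat.lt_pow_succ_log_self (by norm_num) k
        have : 2 ^ (Nat.log 2 k + 1) ≤ 2 ^ (ω + 2) :=
          Nat.pow_le_pow_right (by norm_num) (by omega)
        omega
    | succ d ih =>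
      intro ω t₁ t₂ hd h1 h2 hsize ha hz
      rcases eq_or_lt_of_le h1 with heq | hgt
      · refine ⟨ω, 1, 0, le_refl _, h2, ?_, ?_⟩
        · rw [← heq]; simp [phi]
        · intro j hj; simp at hj
      by_cases hall : ∀ j ∈ Finset.Icc t₁ t₂, (Wstage c n b σ ω j).card ≤ 2 ^ (ω+2)
      · exact ⟨ω, t₁, t₂, le_refl _, h2, hsize,
          fun j hj => ⟨ha j hj, hall j hj, hz j hj⟩⟩
      · push_neg at hall
        obtain ⟨j₀, hj₀, hbig⟩ := hall
        have hωL : ω < Nat.log 2 k := by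
          have hsubk : (Wstage c n b σ ω j₀).card ≤ k := by
            refine le_trans (Finset.card_le_card ?_) hmost
            intro u hu
            simp only [Finset.mem_filter, Finset.mem_univ, true_and]
            exact ne_top_of_mem hu
          by_contra h
          push_neg at h
          have hk' : k < 2 ^ (Nat.log 2 k + 1) := Nat.lt_pow_succ_log_self (by norm_num) k
          have : 2 ^ (Nat.log 2 k + 1) ≤ 2 ^ (ω + 2) :=
            Nat.pow_le_pow_right (by norm_num) (by omega)
          omega
        obtain ⟨t₁', t₂', hsize', ha', hz'⟩ :=
          step_up hn2 hc (by omega : 2 ≤ ω) hsize hz hj₀ hbig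
        have hsize'' : t₂' + 1 = t₁' + phi c n b (ω + 1 - 1) := by
          rw [show ω + 1 - 1 = ω from rfl]; exact hsize'
        obtain ⟨ω', a, b', hle, hle2, hbal⟩ :=
          ih (ω+1) t₁' t₂' (by omega) (by omega) (by omega) hsize'' ha' hz'
        exact ⟨ω', a, b', by omega, hle2, hbal⟩
  exact key

end helpers

/-- Suppose at most `k ≤ n` stations are ever activated, and `[t₁,t₂]` is an interval of size
`φ(ω−1)`, for some `1 ≤ ω ≤ log₂ k`, such that for every `j ∈ [t₁,t₂]`: (a') `|W_ω(j)| ≥ 2^ω`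
and (b') `|W_i(j)| = 0` for every `i > ω`.  Then there exists an `ω'`-balanced interval for
some `ω ≤ ω' ≤ log₂ k`. -/
theorem statement_7 (n b k : ℕ) (hn : 0 < n) (hb : 0 < b) (hk : 0 < k) (hkn : k ≤ n)
    (c : ℝ) (hc : 0 < c) (σ : Fin n → ℕ∞)
    (hmost : (Finset.univ.filter fun u => σ u ≠ ⊤).card ≤ k)
    (ω t₁ t₂ : ℕ) (hω1 : 1 ≤ ω) (hω2 : ω ≤ Nat.log 2 k)
    (hsize : t₂ + 1 = t₁ + phi c n b (ω - 1))
    (ha : ∀ j ∈ Finset.Icc t₁ t₂, 2 ^ ω ≤ (Wstage c n b σ ω j).card)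
    (hz : ∀ j ∈ Finset.Icc t₁ t₂, ∀ i, ω < i → (Wstage c n b σ i j).card = 0) :
    ∃ ω' t₁' t₂' : ℕ, ω ≤ ω' ∧ ω' ≤ Nat.log 2 k ∧
      balancedInterval c n b σ ω' t₁' t₂' := by
  have hk2 : 2 ≤ k := by
    by_contra h
    push_neg at h
    interval_cases k
    · rw [Nat.log_one_right] at hω2
      omega
  have hn2 : 2 ≤ n := le_trans hk2 hkn
  exact aux_ind k hn2 hk2 hc hmost (Nat.log 2 k - ω) ω t₁ t₂ (le_refl _) hω1 hω2 hsize ha hz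
end
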